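/- arXiv:1707.02751 — 6 statements merged into one kernel-verified Lean document; each statement's English description precedes it below -/
import Mathlib

section
/- Let 0 < λ' < λ. Then for every z ∈ ℂ with |Im z| < min(r/4, r²(λ−λ')/(8M)) one has |Im F(z)| ≥ λ' |Im z|. -/
open Set Metric Complex

local notation "conj'" => starRingEnd ℂ

lemma strip_open (r : ℝ) : IsOpen {z : ℂ | |z.im| < r} :=
  isOpen_lt (continuous_abs.comp Complex.continuous_im) continuous_const

lemma strip_preconn (r : ℝ) : IsPreconnected {z : ℂ | |z.im| < r} := by
  have hconv : Convex ℝ {z : ℂ | |z.im| < r} := by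
    have : {z : ℂ | |z.im| < r} = Complex.imLm ⁻¹' (Set.Ioo (-r) r) := by
      ext z; simp [abs_lt]
    rw [this]
    exact (convex_Ioo (-r) r).linear_preimage Complex.imLm
  exact hconv.isPreconnected

/-- conj ∘ f ∘ conj has the conjugated derivative. -/
lemma hasDerivAt_conj_comp {f : ℂ → ℂ} {c w : ℂ} (hf : HasDerivAt f c (conj' w)) :
    HasDerivAt (fun z => conj' (f (conj' z))) (conj' c) w := by
  rw [hasDerivAt_iff_tendsto] at hf ⊢
  have hconj : Filter.Tendsto (fun z : ℂ => conj' z) (nhds w) (nhds (conj' w)) :=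
    (Complex.continuous_conj).tendsto w
  have := hf.comp hconj
  refine this.congr fun z => ?_
  simp only [Function.comp_apply, smul_eq_mul]
  have h2 : conj' (f (conj' z)) - conj' (f (conj' w)) - (z - w) * conj' c
      = conj' (f (conj' z) - f (conj' w) - (conj' z - conj' w) * c) := by
    simp [map_sub, map_mul]
  rw [h2, Complex.norm_conj, show conj' z - conj' w = conj' (z - w) from (map_sub conj' z w).symm,
    Complex.norm_conj]

/-- Schwarz reflection: F is real on ℝ hence `F (conj z) = conj (F z)` on the strip. -/
lemma my_reflection (r : ℝ) (F : ℂ → ℂ) (hr : 0 < r)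
    (hF_holo : DifferentiableOn ℂ F {z : ℂ | |z.im| < r})
    (hF_real : ∀ x : ℝ, (F x).im = 0) :
    ∀ z : ℂ, |z.im| < r → F (conj' z) = conj' (F z) := by
  set U : Set ℂ := {z : ℂ | |z.im| < r} with hU
  have hopen : IsOpen U := strip_open r
  have hFa : AnalyticOnNhd ℂ F U := hF_holo.analyticOnNhd hopen
  have hGd : DifferentiableOn ℂ (fun z => conj' (F (conj' z))) U := by
    intro z hz
    have hcz : conj' z ∈ U := by
      simp only [hU, Set.mem_setOf_eq, Complex.conj_im, abs_neg]
      exact hz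
    have hF' : HasDerivAt F (deriv F (conj' z)) (conj' z) :=
      (hF_holo.differentiableAt (hopen.mem_nhds hcz)).hasDerivAt
    exact (hasDerivAt_conj_comp hF').differentiableAt.differentiableWithinAt
  have hGa : AnalyticOnNhd ℂ (fun z => conj' (F (conj' z))) U := hGd.analyticOnNhd hopen
  have h0 : (0:ℂ) ∈ U := by simp [hU, hr]
  have hfreq : ∃ᶠ z in nhdsWithin (0:ℂ) {(0:ℂ)}ᶜ,
      (fun z => conj' (F (conj' z))) z = F z := by
    have h1 : Filter.Tendsto (fun n : ℕ => ((n:ℝ)+1)⁻¹) Filter.atTop (nhds 0) :=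
      tendsto_one_div_add_atTop_nhds_zero_nat.congr (fun n => one_div _)
    have hbase : Filter.Tendsto (fun n : ℕ => Complex.ofReal (((n:ℝ)+1)⁻¹))
        Filter.atTop (nhds (0:ℂ)) := by
      have h2 := (Complex.continuous_ofReal.tendsto 0).comp h1
      rw [Complex.ofReal_zero] at h2
      exact h2
    have htd : Filter.Tendsto (fun n : ℕ => Complex.ofReal (((n:ℝ)+1)⁻¹)) Filter.atTop
        (nhdsWithin (0:ℂ) {(0:ℂ)}ᶜ) := by
      refine tendsto_nhdsWithin_iff.mpr ⟨hbase, Filter.Eventually.of_forall fun n => ?_⟩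
      simp only [Set.mem_compl_iff, Set.mem_singleton_iff]
      exact Complex.ofReal_ne_zero.mpr (by positivity)
    refine htd.frequently (Filter.Eventually.frequently (Filter.Eventually.of_forall ?_))
    intro n
    have hreal : ∀ x : ℝ, conj' (F (conj' (x:ℂ))) = F (x:ℂ) := by
      intro x
      rw [Complex.conj_ofReal, Complex.conj_eq_iff_im.mpr (hF_real x)]
    exact hreal _
  have heq := hGa.eqOn_of_preconnected_of_frequently_eq hFa (strip_preconn r) h0 hfreq
  intro z hz
  have hcz : conj' z ∈ U := by
    simp only [hU, Set.mem_setOf_eq, Complex.conj_im, abs_neg]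
    exact hz
  have := heq hcz
  simp only [Complex.conj_conj] at this
  exact this.symm

/-- Periodicity for integer shifts. -/
lemma per_int (r : ℝ) (D : ℤ) (F : ℂ → ℂ)
    (hF_per : ∀ z ∈ {z : ℂ | |z.im| < r}, F (z + 1) = F z + D) :
    ∀ n : ℤ, ∀ z : ℂ, |z.im| < r → F (z + n) = F z + n * D := by
  intro n
  induction n using Int.induction_on with
  | zero => intro z hz; simp
  | succ k ih =>
    intro z hz
    have h1 : F (z + (k:ℂ) + 1) = F (z + (k:ℂ)) + D := by
      apply hF_per
      simp only [Set.mem_setOf_eq, Complex.add_im, Complex.intCast_im, add_zero]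
      simpa using hz
    have h2 := ih z hz
    push_cast
    push_cast at h2
    rw [show z + ((k:ℂ) + 1) = z + (k:ℂ) + 1 by ring, h1, h2]
    ring
  | pred k ih =>
    intro z hz
    have hz' : |(z + (-(k:ℂ) - 1)).im| < r := by
      simp only [Complex.add_im, Complex.sub_im, Complex.neg_im, Complex.intCast_im,
        Complex.one_im]
      simpa using hz
    have h1 : F (z + (-(k:ℂ) - 1) + 1) = F (z + (-(k:ℂ) - 1)) + D := hF_per _ hz'
    have h2 := ih z hz
    push_cast
    push_cast at h2
    rw [show z + (-(k:ℂ) - 1) + 1 = z + -(k:ℂ) by ring, h2] at h1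
    have hgoal : F (z + (-(k:ℂ) - 1)) = F z + (-(k:ℂ) - 1) * D := by linear_combination -h1
    convert hgoal using 2 <;> push_cast <;> ring

/-- Sharp Cauchy estimate for the second derivative. -/
lemma cauchy2 (r M : ℝ) (F : ℂ → ℂ) (hr : 0 < r) (hM : 0 ≤ M)
    (hF_holo : DifferentiableOn ℂ F {z : ℂ | |z.im| < r})
    (hbd : ∀ w : ℂ, w.re ∈ Set.Icc (-(r/2)) (1 + r/2) → |w.im| ≤ r/2 →
      ‖F w‖ ≤ M) :
    ∀ c : ℂ, c.re ∈ Set.Icc (0:ℝ) 1 → |c.im| < r/2 →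
      ‖deriv (deriv F) c‖ ≤ 2 * M / (r/2 - |c.im|)^2 := by
  intro c hcre hcim
  set R : ℝ := r/2 - |c.im| with hRdef
  have hRpos : 0 < R := by rw [hRdef]; linarith
  have hRr2 : R ≤ r/2 := by
    rw [hRdef]; have := abs_nonneg c.im; linarith
  clear_value R
  have hball : closedBall c R ⊆ {z : ℂ | |z.im| < r} := by
    intro w hw
    simp only [Set.mem_setOf_eq]
    have h1 : |w.im - c.im| ≤ ‖w - c‖ := by
      simpa using Complex.abs_im_le_norm (w - c)
    have h2 : ‖w - c‖ ≤ R := mem_closedBall_iff_norm.mp hw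
    have h3 : |w.im| ≤ |c.im| + |w.im - c.im| := by
      simpa using abs_add_le c.im (w.im - c.im)
    rw [hRdef] at h2
    linarith
  set Rn : NNReal := ⟨R, hRpos.le⟩ with hRn
  have hRnc : (Rn : ℝ) = R := rfl
  have hps : HasFPowerSeriesOnBall F (cauchyPowerSeries F c Rn) c Rn :=
    (hF_holo.mono (by rw [hRnc]; exact hball)).hasFPowerSeriesOnBall
      (by exact_mod_cast hRpos)
  set p : FormalMultilinearSeries ℂ ℂ ℂ := cauchyPowerSeries F c Rn with hp
  have hd2 : deriv (deriv F) c = iteratedFDeriv ℂ 2 F c (fun _ => 1) := by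
    rw [← iteratedDeriv_eq_iteratedFDeriv, iteratedDeriv_succ, iteratedDeriv_one]
  have hfact := hps.factorial_smul (1:ℂ) 2
  rw [hd2, ← hfact]
  have h2smul : (Nat.factorial 2) • (p 2 fun _ => (1:ℂ))
      = ((Nat.factorial 2 : ℕ) : ℝ) • (p 2 fun _ => (1:ℂ)) :=
    (Nat.cast_smul_eq_nsmul ℝ _ _).symm
  rw [h2smul, norm_smul]
  simp only [Nat.factorial, Real.norm_eq_abs]
  norm_num
  -- bound on the coefficient
  have hcoefapp : ‖p 2 (fun _ => (1:ℂ))‖ ≤ ‖p 2‖ := by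
    have := (p 2).le_opNorm (fun _ => (1:ℂ))
    simpa using this
  have hcoef := norm_cauchyPowerSeries_le F c (Rn:ℝ) 2
  -- the integrand is bounded by M
  have hmem : ∀ θ : ℝ, circleMap c R θ ∈ closedBall c R :=
    fun θ => circleMap_mem_closedBall c hRpos.le θ
  have hle : ∀ θ : ℝ, ‖F (circleMap c R θ)‖ ≤ M := by
    intro θ
    have hsub : ‖circleMap c R θ - c‖ ≤ R := mem_closedBall_iff_norm.mp (hmem θ)
    have hre : |(circleMap c R θ).re - c.re| ≤ R := by
      have h := Complex.abs_re_le_norm (circleMap c R θ - c)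
      rw [Complex.sub_re] at h
      exact le_trans h hsub
    have him : |(circleMap c R θ).im - c.im| ≤ R := by
      have h := Complex.abs_im_le_norm (circleMap c R θ - c)
      rw [Complex.sub_im] at h
      exact le_trans h hsub
    rw [abs_le] at hre him
    have h3 : |(circleMap c R θ).im| ≤ |c.im| + |(circleMap c R θ).im - c.im| := by
      simpa using abs_add_le c.im ((circleMap c R θ).im - c.im)
    refine hbd _ ⟨?_, ?_⟩ ?_
    · linarith [hre.1, hcre.1, hRr2, abs_nonneg c.im]
    · linarith [hre.2, hcre.2, hRr2, abs_nonneg c.im]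
    · rw [abs_le]
      have h4 : |(circleMap c R θ).im - c.im| ≤ R := abs_le.mpr him
      have h5 : |c.im| + R = r/2 := by rw [hRdef]; ring
      constructor
      · nlinarith [neg_abs_le c.im, him.1, abs_nonneg c.im]
      · nlinarith [le_abs_self c.im, him.2, h3, h4, abs_nonneg c.im]
  have hcont : ContinuousOn (fun θ : ℝ => ‖F (circleMap c R θ)‖)
      (Set.uIcc 0 (2*Real.pi)) := by
    apply ContinuousOn.norm
    exact (hF_holo.continuousOn.comp (continuous_circleMap c R).continuousOn
      (fun θ _ => hball (hmem θ))).mono (Set.subset_univ _)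
  have hint : (∫ θ in (0:ℝ)..2*Real.pi, ‖F (circleMap c R θ)‖) ≤ 2*Real.pi*M := by
    have h1 : (∫ θ in (0:ℝ)..2*Real.pi, ‖F (circleMap c R θ)‖)
        ≤ ∫ _ in (0:ℝ)..2*Real.pi, M := by
      apply intervalIntegral.integral_mono_on Real.two_pi_pos.le
      · exact hcont.intervalIntegrable
      · exact intervalIntegrable_const
      · exact fun θ _ => hle θ
    rw [intervalIntegral.integral_const] at h1
    simpa [mul_comm] using h1
  have hintnn : (0:ℝ) ≤ (2*Real.pi)⁻¹ := by positivity
  have hRabs : |(Rn:ℝ)| = R := by rw [hRnc]; exact abs_of_pos hRpos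
  calc (2:ℝ) * ‖p 2 fun _ => 1‖ ≤ 2 * ‖p 2‖ := by linarith [hcoefapp]
    _ ≤ 2 * (((2*Real.pi)⁻¹ * ∫ θ in (0:ℝ)..2*Real.pi, ‖F (circleMap c (Rn:ℝ) θ)‖)
        * |(Rn:ℝ)|⁻¹ ^ 2) := by
      have := hcoef
      nlinarith [this]
    _ ≤ 2 * (((2*Real.pi)⁻¹ * (2*Real.pi*M)) * |(Rn:ℝ)|⁻¹ ^ 2) := by
      apply mul_le_mul_of_nonneg_left _ (by norm_num : (0:ℝ) ≤ 2)
      apply mul_le_mul_of_nonneg_right _ (by positivity)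
      apply mul_le_mul_of_nonneg_left _ hintnn
      rw [hRnc]; exact hint
    _ = 2 * M / R^2 := by
      rw [hRabs]
      field_simp

/-- Key estimate along vertical segments rooted on [0,1]. -/
lemma key_est (r lam lam' M : ℝ) (F : ℂ → ℂ)
    (hr : 0 < r) (hlam' : 0 < lam') (hlamlt : lam' < lam) (hMpos : 0 < M)
    (hF_holo : DifferentiableOn ℂ F {z : ℂ | |z.im| < r})
    (hF_real : ∀ x : ℝ, (F x).im = 0)
    (hF_deriv : ∀ x : ℝ, lam ≤ (deriv F x).re)
    (hbd : ∀ w : ℂ, w.re ∈ Set.Icc (-(r/2)) (1 + r/2) → |w.im| ≤ r/2 →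
      ‖F w‖ ≤ M) :
    ∀ x y : ℝ, x ∈ Set.Icc (0:ℝ) 1 → 0 ≤ y →
      y < min (r/4) (r^2 * (lam - lam') / (8*M)) →
      lam' * y ≤ (F (x + y*Complex.I)).im := by
  intro x y hx hy0 hylt
  have hy4 : y < r/4 := lt_of_lt_of_le hylt (min_le_left _ _)
  have hy8 : y < r^2 * (lam - lam') / (8*M) := lt_of_lt_of_le hylt (min_le_right _ _)
  have hbd' : ∀ w : ℂ, w.re ∈ Set.Icc (-(r/2)) (1 + r/2) → |w.im| ≤ r/2 → ‖F w‖ ≤ M := hbd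
  set U : Set ℂ := {z : ℂ | |z.im| < r} with hU
  have hopen : IsOpen U := strip_open r
  have hanal : AnalyticOnNhd ℂ F U := hF_holo.analyticOnNhd hopen
  have hF'd : DifferentiableOn ℂ (deriv F) U := hanal.deriv.differentiableOn
  have hmem : ∀ t : ℝ, |t| < r → ((x:ℂ) + t*Complex.I) ∈ U := by
    intro t ht
    have : ((x:ℂ) + t*Complex.I).im = t := by simp
    simp only [hU, Set.mem_setOf_eq, this]
    exact ht
  have hline : ∀ t : ℝ, HasDerivAt (fun s : ℝ => (x:ℂ) + s*Complex.I) Complex.I t := by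
    intro t
    have h1 : HasDerivAt (fun s : ℝ => (s:ℂ)) (Complex.ofRealCLM 1) t :=
      Complex.ofRealCLM.hasDerivAt
    have h2 := (h1.mul_const Complex.I).const_add (x:ℂ)
    simpa using h2
  -- derivative of Im F ∘ line
  have hgderiv : ∀ t : ℝ, |t| < r →
      HasDerivAt (fun s : ℝ => (F ((x:ℂ) + s*Complex.I)).im)
        ((deriv F ((x:ℂ) + t*Complex.I)).re) t := by
    intro t ht
    have hF1 : HasDerivAt F (deriv F ((x:ℂ)+t*Complex.I)) ((x:ℂ)+t*Complex.I) :=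
      (hF_holo.differentiableAt (hopen.mem_nhds (hmem t ht))).hasDerivAt
    have hcomp : HasDerivAt (fun s : ℝ => F ((x:ℂ) + s*Complex.I))
        (Complex.I • deriv F ((x:ℂ)+t*Complex.I)) t := by
      have hf := (hF1.hasFDerivAt.restrictScalars ℝ).comp_hasDerivAt t (hline t)
      simpa [ContinuousLinearMap.smulRight_apply, ContinuousLinearMap.one_apply,
        smul_eq_mul, mul_comm, Function.comp_def] using hf
    have him := Complex.imCLM.hasFDerivAt.comp_hasDerivAt t hcomp
    have heq : Complex.imCLM (Complex.I • deriv F ((x:ℂ)+t*Complex.I))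
        = (deriv F ((x:ℂ)+t*Complex.I)).re := by
      simp [smul_eq_mul, Complex.mul_im]
    rw [heq] at him
    exact him
  -- derivative of Re (deriv F) ∘ line
  have hphideriv : ∀ t : ℝ, |t| < r →
      HasDerivAt (fun s : ℝ => (deriv F ((x:ℂ) + s*Complex.I)).re)
        ((Complex.I • deriv (deriv F) ((x:ℂ)+t*Complex.I)).re) t := by
    intro t ht
    have hF2 : HasDerivAt (deriv F) (deriv (deriv F) ((x:ℂ)+t*Complex.I))
        ((x:ℂ)+t*Complex.I) :=
      (hF'd.differentiableAt (hopen.mem_nhds (hmem t ht))).hasDerivAt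
    have hcomp : HasDerivAt (fun s : ℝ => deriv F ((x:ℂ) + s*Complex.I))
        (Complex.I • deriv (deriv F) ((x:ℂ)+t*Complex.I)) t := by
      have hf := (hF2.hasFDerivAt.restrictScalars ℝ).comp_hasDerivAt t (hline t)
      simpa [ContinuousLinearMap.smulRight_apply, ContinuousLinearMap.one_apply,
        smul_eq_mul, mul_comm, Function.comp_def] using hf
    exact Complex.reCLM.hasFDerivAt.comp_hasDerivAt t hcomp
  -- second derivative bound along the segment
  have hF2bd : ∀ t : ℝ, 0 ≤ t → t < r/2 →
      ‖deriv (deriv F) ((x:ℂ)+t*Complex.I)‖ ≤ 2*M/(r/2 - t)^2 := by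
    intro t ht0 ht2
    have h := cauchy2 r M F hr hMpos.le hF_holo hbd' ((x:ℂ)+t*Complex.I)
      (by simpa using hx) (by simpa [_root_.abs_of_nonneg ht0] using ht2)
    simpa [_root_.abs_of_nonneg ht0] using h
  -- level 1 : monotone auxiliary function
  set ψ : ℝ → ℝ := fun t => (deriv F ((x:ℂ) + t*Complex.I)).re + 2*M*(r/2 - t)⁻¹
    with hψdef
  have hψd : ∀ t : ℝ, 0 ≤ t → t < r/2 → HasDerivAt ψ
      ((Complex.I • deriv (deriv F) ((x:ℂ)+t*Complex.I)).re + 2*M*((r/2-t)^2)⁻¹) t := by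
    intro t ht0 ht2
    have h1 : HasDerivAt (fun s : ℝ => r/2 - s) (-1) t := (hasDerivAt_id t).const_sub (r/2)
    have h2 : HasDerivAt (fun s : ℝ => (r/2 - s)⁻¹) (-(-1)/(r/2-t)^2) t :=
      h1.inv (ne_of_gt (by linarith : (0:ℝ) < r/2 - t))
    have h3 := (h2.const_mul (2*M))
    have h4 := (hphideriv t (by rw [_root_.abs_of_nonneg ht0]; linarith)).add h3
    have : 2*M * (-(-1)/(r/2-t)^2) = 2*M*((r/2-t)^2)⁻¹ := by
      field_simp
    rw [this] at h4
    exact h4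
  have hψmono : MonotoneOn ψ (Set.Icc 0 (r/4)) := by
    apply monotoneOn_of_deriv_nonneg (convex_Icc 0 (r/4))
    · intro t ht
      exact ((hψd t ht.1 (by linarith [ht.2])).continuousAt).continuousWithinAt
    · rw [interior_Icc]
      intro t ht
      exact ((hψd t ht.1.le (by linarith [ht.2])).differentiableAt).differentiableWithinAt
    · rw [interior_Icc]
      intro t ht
      rw [(hψd t ht.1.le (by linarith [ht.2])).deriv]
      have hb := hF2bd t ht.1.le (by linarith [ht.2])
      set d := deriv (deriv F) ((x:ℂ)+t*Complex.I) with hd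
      have h5 : |(Complex.I • d).re| ≤ ‖Complex.I • d‖ := by
        exact Complex.abs_re_le_norm _
      have h6 : ‖Complex.I • d‖ = ‖d‖ := by
        rw [norm_smul]; simp
      have hre : -‖d‖ ≤ (Complex.I • d).re := by
        have := neg_abs_le ((Complex.I • d).re)
        rw [h6] at h5
        linarith
      have hb' : ‖d‖ ≤ 2*M*((r/2-t)^2)⁻¹ := by
        rw [← div_eq_mul_inv]; exact hb
      linarith
  -- lower bound for Re (deriv F) on the segment
  have hφlb : ∀ t : ℝ, t ∈ Set.Icc 0 (r/4) →
      lam - 16*M*t/r^2 ≤ (deriv F ((x:ℂ) + t*Complex.I)).re := by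
    intro t ht
    have h0 := hψmono (Set.left_mem_Icc.mpr (by linarith)) ht ht.1
    have hx0 : ((x:ℂ) + (0:ℝ)*Complex.I) = (x:ℂ) := by push_cast; ring
    rw [hψdef] at h0
    simp only [hx0] at h0
    have hlam0 : lam ≤ (deriv F (x:ℂ)).re := hF_deriv x
    have hu : (0:ℝ) < r/2 - t := by linarith [ht.2]
    have hu2 : r/4 ≤ r/2 - t := by linarith [ht.2]
    have hkey : 2*M*(r/2 - t)⁻¹ - 2*M*(r/2 - 0)⁻¹ ≤ 16*M*t/r^2 := by
      have e1 : (r/2 - t)⁻¹ - (r/2 - 0)⁻¹ = t / ((r/2-t)*(r/2)) := by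
        rw [sub_zero]
        have hune : r/2 - t ≠ 0 := ne_of_gt hu
        have hr2ne : (r/2 : ℝ) ≠ 0 := ne_of_gt (by linarith)
        rw [inv_eq_one_div, inv_eq_one_div, div_sub_div _ _ hune hr2ne]
        congr 1
        ring
      have e2 : t / ((r/2-t)*(r/2)) ≤ t / (r^2/8) := by
        apply div_le_div_of_nonneg_left ht.1 (by positivity)
        nlinarith
      have e3 : t / (r^2/8) = 8*t/r^2 := by
        rw [div_div_eq_mul_div]; ring
      calc 2*M*(r/2-t)⁻¹ - 2*M*(r/2-0)⁻¹ = 2*M*((r/2-t)⁻¹ - (r/2-0)⁻¹) := by ring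
        _ = 2*M*(t/((r/2-t)*(r/2))) := by rw [e1]
        _ ≤ 2*M*(8*t/r^2) := by
          apply mul_le_mul_of_nonneg_left _ (by positivity)
          rw [← e3]; exact e2
        _ = 16*M*t/r^2 := by ring
    linarith [h0, hlam0, hkey]
  -- level 2 : monotone comparison for Im F
  set χ : ℝ → ℝ := fun t => (F ((x:ℂ) + t*Complex.I)).im - (lam*t - 8*M*t^2/r^2)
    with hχdef
  have hχd : ∀ t : ℝ, 0 ≤ t → t ≤ r/4 → HasDerivAt χ
      ((deriv F ((x:ℂ)+t*Complex.I)).re - (lam - 8*M*(2*t)/r^2)) t := by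
    intro t ht0 ht4
    have h1 := hgderiv t (by rw [_root_.abs_of_nonneg ht0]; linarith)
    have h2 : HasDerivAt (fun s : ℝ => lam*s - 8*M*s^2/r^2)
        (lam - 8*M*(2*t)/r^2) t := by
      have ha : HasDerivAt (fun s : ℝ => lam*s) lam t := by
        simpa using (hasDerivAt_id t).const_mul lam
      have hb : HasDerivAt (fun s : ℝ => 8*M*s^2/r^2) (8*M*(2*t)/r^2) t := by
        have := ((hasDerivAt_pow 2 t).const_mul (8*M)).div_const (r^2)
        simpa [pow_one, mul_comm] using this
      exact ha.sub hb
    exact h1.sub h2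
  have hχmono : MonotoneOn χ (Set.Icc 0 y) := by
    apply monotoneOn_of_deriv_nonneg (convex_Icc 0 y)
    · intro t ht
      exact ((hχd t ht.1 (by linarith [ht.2])).continuousAt).continuousWithinAt
    · rw [interior_Icc]
      intro t ht
      exact ((hχd t ht.1.le (by linarith [ht.2])).differentiableAt).differentiableWithinAt
    · rw [interior_Icc]
      intro t ht
      rw [(hχd t ht.1.le (by linarith [ht.2])).deriv]
      have := hφlb t ⟨ht.1.le, by linarith [ht.2]⟩
      have he : 8*M*(2*t)/r^2 = 16*M*t/r^2 := by ring
      rw [he]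
      linarith
  have hχ0 : χ 0 ≤ χ y := hχmono (Set.left_mem_Icc.mpr hy0)
    (Set.right_mem_Icc.mpr hy0) hy0
  have hx0 : ((x:ℂ) + (0:ℝ)*Complex.I) = (x:ℂ) := by push_cast; ring
  rw [hχdef] at hχ0
  simp only [hx0, hF_real x] at hχ0
  -- hχ0 : 0 - 0 ≤ (F (x+y I)).im - (lam*y - 8M y²/r²)
  have hIm : lam*y - 8*M*y^2/r^2 ≤ (F ((x:ℂ) + y*Complex.I)).im := by
    have : (0:ℝ) - (lam*0 - 8*M*0^2/r^2) ≤ (F ((x:ℂ) + y*Complex.I)).im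
        - (lam*y - 8*M*y^2/r^2) := by simpa using hχ0
    simpa using this
  -- final numeric step
  have h8M : (0:ℝ) < 8*M := by linarith
  have hyM : y * (8*M) < r^2 * (lam - lam') := by
    rw [lt_div_iff₀ h8M] at hy8
    exact hy8
  have hr2 : (0:ℝ) < r^2 := by positivity
  have : 8*M*y^2/r^2 ≤ (lam - lam')*y := by
    rw [div_le_iff₀ hr2]
    nlinarith [hyM, hy0]
  linarith [hIm, this]

/-- Let `0 < λ' < λ`. Then for every `z ∈ ℂ` with
`|Im z| < min(r/4, r²(λ−λ')/(8M))` one has `|Im F(z)| ≥ λ' |Im z|`.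
Here `F` is the lift of an analytic expanding circle map, holomorphic on the strip
`S_r`, mapping `ℝ` to `ℝ`, with `F(z+1) = F(z) + D` and `F'(x) ≥ λ` on `ℝ`, and
`M = sup {|F(z)| : Re z ∈ [−r/2, 1+r/2], |Im z| ≤ r/2}` is a finite positive real. -/
theorem stmt_0 (r lam lam' M : ℝ) (D : ℤ) (F : ℂ → ℂ)
    (hr : 0 < r)
    (hlam' : 0 < lam') (hlamlt : lam' < lam)
    (hF_holo : DifferentiableOn ℂ F {z : ℂ | |z.im| < r})
    (hF_real : ∀ x : ℝ, (F x).im = 0)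
    (hF_per : ∀ z ∈ {z : ℂ | |z.im| < r}, F (z + 1) = F z + D)
    (hF_deriv : ∀ x : ℝ, lam ≤ (deriv F x).re)
    (hM : IsLUB {y : ℝ | ∃ z : ℂ, z.re ∈ Set.Icc (-(r/2)) (1 + r/2) ∧
      |z.im| ≤ r/2 ∧ y = ‖F z‖} M)
    (hMpos : 0 < M) :
    ∀ z : ℂ, |z.im| < min (r/4) (r^2 * (lam - lam') / (8*M)) →
      lam' * |z.im| ≤ |(F z).im| := by
  have hbd : ∀ w : ℂ, w.re ∈ Set.Icc (-(r/2)) (1 + r/2) → |w.im| ≤ r/2 →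
      ‖F w‖ ≤ M := by
    intro w h1 h2
    exact hM.1 ⟨w, h1, h2, rfl⟩
  -- nonneg imaginary part case
  have main : ∀ z : ℂ, 0 ≤ z.im →
      z.im < min (r/4) (r^2 * (lam - lam') / (8*M)) → lam' * z.im ≤ (F z).im := by
    intro z h0 hb
    have hb4 : z.im < r/4 := lt_of_lt_of_le hb (min_le_left _ _)
    have hzr : |z.im| < r := by rw [_root_.abs_of_nonneg h0]; linarith
    set n : ℤ := ⌊z.re⌋ with hn
    set w : ℂ := z - n with hw
    have hwim : w.im = z.im := by simp [hw]
    have hwU : |w.im| < r := by rw [hwim]; exact hzr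
    have hFzw : F z = F w + n * D := by
      have := per_int r D F hF_per n w hwU
      rw [show w + (n:ℂ) = z by ring] at this
      exact this
    have him : (F z).im = (F w).im := by
      rw [hFzw]; simp
    have hwre : w.re ∈ Set.Icc (0:ℝ) 1 := by
      constructor
      · simp only [hw, Complex.sub_re, Complex.intCast_re]
        linarith [Int.floor_le z.re]
      · simp only [hw, Complex.sub_re, Complex.intCast_re]
        linarith [Int.lt_floor_add_one z.re]
    have := key_est r lam lam' M F hr hlam' hlamlt hMpos hF_holo hF_real hF_deriv hbd
      w.re w.im hwre (hwim ▸ h0) (by rw [hwim]; exact hb)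
    rw [Complex.re_add_im w] at this
    rw [him, ← hwim]
    exact this
  intro z hz
  rcases le_or_gt 0 z.im with h0 | h0
  · rw [_root_.abs_of_nonneg h0]
    exact le_trans (main z h0 (by rwa [_root_.abs_of_nonneg h0] at hz)) (le_abs_self _)
  · have hcz : (conj' z).im = -z.im := by simp
    have h0' : 0 ≤ (conj' z).im := by rw [hcz]; linarith
    have hb' : (conj' z).im < min (r/4) (r^2 * (lam - lam') / (8*M)) := by
      rw [hcz]; rwa [_root_.abs_of_neg h0] at hz
    have := main (conj' z) h0' hb'
    have hzr : |z.im| < r := by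
      have : min (r/4) (r^2 * (lam - lam') / (8*M)) ≤ r/4 := min_le_left _ _
      have := lt_of_lt_of_le hz this; linarith
    rw [my_reflection r F hr hF_holo hF_real z hzr] at this
    have him : (conj' (F z)).im = -(F z).im := by simp
    rw [him, hcz] at this
    rw [_root_.abs_of_neg h0]
    calc lam' * -z.im ≤ -(F z).im := this
      _ ≤ |(F z).im| := neg_le_abs _
end

section
/- Let ρ > 0, let Ω ⊆ ℂ be open with closure(𝔸_ρ) ⊆ Ω, and let g : Ω → ℂ be holomorphic with g'(z) ≠ 0 for all z ∈ Ω. Assume g(S¹) ⊆ S¹, that {z ∈ 𝔸_ρ : g(z) ∈ S¹} = S¹, and that there is an integer D ≥ 1 such that for every w ∈ 𝔸_ρ the fiber {z ∈ 𝔸_ρ : g(z) = w} has exactly D elements. Then, setting W = 𝔸_ρ ∩ g⁻¹(𝔸_ρ), the restriction of g to a map from W onto 𝔸_ρ is a covering map (with D sheets), and W is path-connected. -/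
open Set Topology

theorem myIsOpen_image_of_localHomeoOn {α β : Type*} [TopologicalSpace α] [TopologicalSpace β]
    {f : α → β} {t s : Set α} (hf : IsLocalHomeomorphOn f t) (hs : IsOpen s) (hst : s ⊆ t) :
    IsOpen (f '' s) := by
  rw [isOpen_iff_mem_nhds]
  rintro _ ⟨z, hz, rfl⟩
  rw [← hf.map_nhds_eq (hst hz)]
  exact Filter.image_mem_map (hs.mem_nhds hz)

theorem myExpImageIoo (a b : ℝ) :
    Real.exp '' Set.Ioo a b = Set.Ioo (Real.exp a) (Real.exp b) := by
  ext x
  constructor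
  · rintro ⟨y, hy, rfl⟩
    exact ⟨Real.exp_lt_exp.2 hy.1, Real.exp_lt_exp.2 hy.2⟩
  · rintro ⟨h1, h2⟩
    have hx : 0 < x := lt_trans (Real.exp_pos a) h1
    exact ⟨Real.log x, ⟨(Real.lt_log_iff_exp_lt hx).2 h1, (Real.log_lt_iff_lt_exp hx).2 h2⟩,
      Real.exp_log hx⟩

theorem myExpImageSet (t : Set ℝ) :
    {z : ℂ | ‖z‖ ∈ Real.exp '' t} = Complex.exp '' (Complex.re ⁻¹' t) := by
  ext z
  constructor
  · rintro ⟨a, ha, haz⟩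
    have hz0 : z ≠ 0 := by
      intro h
      rw [h] at haz
      simp only [norm_zero] at haz
      exact (Real.exp_pos a).ne' haz
    refine ⟨Complex.log z, ?_, Complex.exp_log hz0⟩
    show (Complex.log z).re ∈ t
    rw [Complex.log_re, ← haz, Real.log_exp]
    exact ha
  · rintro ⟨w, hw, rfl⟩
    exact ⟨w.re, hw, (Complex.norm_exp w).symm⟩

theorem myPathConn (t : Set ℝ) (hconv : Convex ℝ t) (hne : t.Nonempty) :
    IsPathConnected {z : ℂ | ‖z‖ ∈ Real.exp '' t} := by
  rw [myExpImageSet]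
  refine IsPathConnected.image ?_ Complex.continuous_exp
  refine Convex.isPathConnected ?_ ?_
  · have := hconv.linear_preimage Complex.reLm
    rwa [show ⇑Complex.reLm = Complex.re from Complex.reLm_coe] at this
  · obtain ⟨a, ha⟩ := hne
    exact ⟨(a : ℂ), by simpa using ha⟩

theorem isCoveringMap_of_fiber_ncard {E X : Type*} [TopologicalSpace E] [TopologicalSpace X]
    [T2Space E] {f : E → X} (hf : IsLocalHomeomorph f) {n : ℕ} (hn : 1 ≤ n)
    (hfib : ∀ x : X, (f ⁻¹' {x}).ncard = n) : IsCoveringMap f := by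
  have hfin : ∀ x : X, (f ⁻¹' {x}).Finite := by
    intro x
    by_contra h
    have := hfib x
    rw [Set.Infinite.ncard h] at this
    omega
  intro x
  haveI hFxfin : Finite ↥(f ⁻¹' {x}) := (hfin x).to_subtype
  haveI : DiscreteTopology ↥(f ⁻¹' {x}) := Finite.instDiscreteTopology
  refine ⟨inferInstance, ?_⟩
  haveI hne : Nonempty ↥(f ⁻¹' {x}) := by
    refine Set.Nonempty.to_subtype ?_
    rw [Set.nonempty_iff_ne_empty]
    intro h
    have := hfib x
    rw [h, Set.ncard_empty] at this
    omega
  -- disjoint open neighborhoods of fiber points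
  obtain ⟨U, hU, hUdisj⟩ := (hfin x).t2_separation
  -- local homeomorphisms at each fiber point, restricted to the disjoint opens
  have hΦ : ∀ i : ↥(f ⁻¹' {x}), ∃ e : OpenPartialHomeomorph E X,
      i.1 ∈ e.source ∧ ⇑e = f ∧ e.source ⊆ U i.1 := by
    intro i
    obtain ⟨e, hi, hef⟩ := hf i.1
    refine ⟨e.restrOpen (U i.1) (hU i.1).2, ?_, ?_, ?_⟩
    · rw [OpenPartialHomeomorph.restrOpen_source]
      exact ⟨hi, (hU i.1).1⟩
    · subst hef; rfl
    · rw [OpenPartialHomeomorph.restrOpen_source]; exact inter_subset_right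
  choose Ψ hΨmem hΨf hΨU using hΦ
  set V : Set X := ⋂ i : ↥(f ⁻¹' {x}), (Ψ i).target with hV
  have hVopen : IsOpen V := isOpen_iInter_of_finite fun i => (Ψ i).open_target
  have hxV : x ∈ V := by
    refine mem_iInter.2 fun i => ?_
    have := (Ψ i).map_source (hΨmem i)
    rwa [show (Ψ i) i.1 = x by rw [hΨf i]; exact i.2] at this
  have hVsub : ∀ i, V ⊆ (Ψ i).target := fun i => iInter_subset _ i
  -- symm maps into sources which are disjoint
  have hsymm_mem : ∀ (i : ↥(f ⁻¹' {x})) {v}, v ∈ V → (Ψ i).symm v ∈ (Ψ i).source :=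
    fun i v hv => (Ψ i).map_target (hVsub i hv)
  have hfsymm : ∀ (i : ↥(f ⁻¹' {x})) {v}, v ∈ V → f ((Ψ i).symm v) = v := by
    intro i v hv
    rw [← hΨf i]
    exact (Ψ i).right_inv (hVsub i hv)
  have hsrc_disj : ∀ i j : ↥(f ⁻¹' {x}), i ≠ j → Disjoint (Ψ i).source (Ψ j).source := by
    intro i j hij
    exact Set.disjoint_of_subset (hΨU i) (hΨU j)
      (hUdisj i.2 j.2 (fun h => hij (Subtype.ext h)))
  -- key counting claim: every point of f ⁻¹' V lies in some source
  have hcover : ∀ e : E, f e ∈ V → ∃ i, e ∈ (Ψ i).source := by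
    intro e he
    set v := f e with hv'
    have hpinj : Function.Injective (fun i : ↥(f ⁻¹' {x}) => (Ψ i).symm v) := by
      intro i j h
      by_contra hij
      have hj := hsymm_mem j he
      rw [← show (Ψ i).symm v = (Ψ j).symm v from h] at hj
      exact Set.disjoint_left.1 (hsrc_disj i j hij) (hsymm_mem i he) hj
    have hrange : range (fun i : ↥(f ⁻¹' {x}) => (Ψ i).symm v) ⊆ f ⁻¹' {v} := by
      rintro _ ⟨i, rfl⟩
      exact hfsymm i he
    have hcard : (range (fun i : ↥(f ⁻¹' {x}) => (Ψ i).symm v)).ncard = n := by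
      rw [← Set.image_univ, Set.ncard_image_of_injective _ hpinj, Set.ncard_univ,
        Nat.card_coe_set_eq, hfib x]
    have : range (fun i : ↥(f ⁻¹' {x}) => (Ψ i).symm v) = f ⁻¹' {v} :=
      Set.eq_of_subset_of_ncard_le hrange (by rw [hcard, hfib v]) (hfin v)
    have hemem : e ∈ range (fun i : ↥(f ⁻¹' {x}) => (Ψ i).symm v) := by
      rw [this]; exact rfl
    obtain ⟨i, hi⟩ := hemem
    refine ⟨i, ?_⟩
    rw [← hi]
    exact hsymm_mem i he
  -- the index function
  set idx : E → ↥(f ⁻¹' {x}) := fun e =>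
    open Classical in
    if h : ∃ i, e ∈ (Ψ i).source then h.choose else Classical.arbitrary _ with hidx
  have hidx_mem : ∀ e : E, f e ∈ V → e ∈ (Ψ (idx e)).source := by
    intro e he
    have h : ∃ i, e ∈ (Ψ i).source := hcover e he
    simp only [hidx, dif_pos h]
    exact h.choose_spec
  have hidx_unique : ∀ (e : E) (i : ↥(f ⁻¹' {x})), f e ∈ V → e ∈ (Ψ i).source → idx e = i := by
    intro e i he hi
    by_contra hne
    exact Set.disjoint_left.1 (hsrc_disj _ _ hne) (hidx_mem e he) hi
  -- the trivialization
  refine (IsEvenlyCovered.of_trivialization (f := f) (I := ↥(f ⁻¹' {x}))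
    (t := ⟨⟨⟨⟨fun e => (f e, idx e), fun p => (Ψ p.2).symm p.1, f ⁻¹' V, V ×ˢ univ,
    ?_, ?_, ?_, ?_⟩, ?_, ?_⟩, ?_, ?_⟩, V, hVopen, rfl, rfl, fun p _ => rfl⟩) hxV).2
  pick_goal 6; pick_goal 6; rotate_left 2
  · -- map_source'
    intro e he
    exact ⟨he, mem_univ _⟩
  · -- map_target'
    rintro ⟨v, i⟩ ⟨hv, -⟩
    simpa [Set.mem_preimage, hfsymm i hv] using hv
  · -- left_inv'
    intro e he
    show (Ψ (idx (e))).symm (f e) = e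
    have := (Ψ (idx e)).left_inv (hidx_mem e he)
    rwa [hΨf (idx e)] at this
  · -- right_inv'
    rintro ⟨v, i⟩ ⟨hv, -⟩
    have h1 : f ((Ψ i).symm v) = v := hfsymm i hv
    have h2 : idx ((Ψ i).symm v) = i :=
      hidx_unique _ i (by rw [h1]; exact hv) (hsymm_mem i hv)
    simp [h1, h2]
  · -- open_source
    exact hVopen.preimage hf.continuous
  · -- open_target
    exact (hVopen.prod isOpen_univ)
  · -- continuousOn_toFun
    intro e he
    apply ContinuousAt.continuousWithinAt
    refine ContinuousAt.prodMk (hf.continuous.continuousAt) ?_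
    have hopen : IsOpen ((Ψ (idx e)).source ∩ f ⁻¹' V) :=
      (Ψ (idx e)).open_source.inter (hVopen.preimage hf.continuous)
    have hmem : e ∈ (Ψ (idx e)).source ∩ f ⁻¹' V := ⟨hidx_mem e he, he⟩
    have : idx =ᶠ[nhds e] fun _ => idx e := by
      filter_upwards [hopen.mem_nhds hmem] with a ha
      exact hidx_unique a (idx e) ha.2 ha.1
    exact (continuousAt_const (y := idx e)).congr this.symm
  · -- continuousOn_invFun
    rintro ⟨v, i⟩ ⟨hv, -⟩
    apply ContinuousAt.continuousWithinAt
    have hopen : IsOpen ((univ : Set X) ×ˢ ({i} : Set ↥(f ⁻¹' {x}))) :=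
      isOpen_univ.prod (isOpen_discrete _)
    have heq : (fun p : X × ↥(f ⁻¹' {x}) => (Ψ p.2).symm p.1) =ᶠ[nhds (v, i)]
        fun p => (Ψ i).symm p.1 := by
      filter_upwards [hopen.mem_nhds ⟨mem_univ _, rfl⟩] with p hp
      rw [show p.2 = i from hp.2]
    refine ContinuousAt.congr ?_ heq.symm
    exact ((Ψ i).continuousAt_symm (hVsub i hv)).comp continuousAt_fst

/-- Annulus model of an analytic expanding circle map. With
`𝔸_ρ = {z : e^{−2πρ} < |z| < e^{2πρ}}`, `g` holomorphic with nonvanishing derivative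
on a neighborhood `Ω` of the closed annulus, preserving the unit circle, whose only
points of the annulus mapped to the circle are circle points, and with all fibers over
the annulus of cardinality `D ≥ 1`: then `g` restricted to `W = 𝔸_ρ ∩ g⁻¹(𝔸_ρ)` is a
`D`-sheeted covering map onto `𝔸_ρ`, and `W` is path-connected. -/
theorem stmt_2 (ρ : ℝ) (hρ : 0 < ρ) (Ω : Set ℂ) (hΩ : IsOpen Ω)
    (g : ℂ → ℂ) (D : ℕ) (hD : 1 ≤ D)
    (A : Set ℂ)
    (hA : A = {z : ℂ | Real.exp (-(2*Real.pi*ρ)) < ‖z‖ ∧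
      ‖z‖ < Real.exp (2*Real.pi*ρ)})
    (hcl : closure A ⊆ Ω)
    (hg : DifferentiableOn ℂ g Ω)
    (hg' : ∀ z ∈ Ω, deriv g z ≠ 0)
    (hgS : ∀ z : ℂ, ‖z‖ = 1 → ‖g z‖ = 1)
    (hcircle : {z ∈ A | ‖g z‖ = 1} = {z : ℂ | ‖z‖ = 1})
    (hfib : ∀ w ∈ A, ({z ∈ A | g z = w}).ncard = D) :
    IsCoveringMap (fun z : (A ∩ g ⁻¹' A : Set ℂ) => (⟨g z.1, z.2.2⟩ : A)) ∧
    (∀ w ∈ A, ({z ∈ A ∩ g ⁻¹' A | g z = w}).ncard = D) ∧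
    IsPathConnected (A ∩ g ⁻¹' A) := by
  have hc : 0 < 2*Real.pi*ρ := by positivity
  have hAopen : IsOpen A := by
    rw [hA]
    exact isOpen_Ioo.preimage continuous_norm
  have hAΩ : A ⊆ Ω := fun z hz => hcl (subset_closure hz)
  have hWΩ : (A ∩ g ⁻¹' A : Set ℂ) ⊆ Ω := fun z hz => hAΩ hz.1
  have hcircA : ∀ z : ℂ, ‖z‖ = 1 → z ∈ A := by
    intro z hz
    rw [hA]
    refine ⟨?_, ?_⟩ <;> rw [hz]
    · calc Real.exp (-(2*Real.pi*ρ)) < Real.exp 0 := Real.exp_lt_exp.2 (by linarith)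
        _ = 1 := Real.exp_zero
    · calc (1:ℝ) = Real.exp 0 := Real.exp_zero.symm
        _ < Real.exp (2*Real.pi*ρ) := Real.exp_lt_exp.2 (by linarith)
  have hcircW : {z : ℂ | ‖z‖ = 1} ⊆ A ∩ g ⁻¹' A := fun z hz =>
    ⟨hcircA z hz, hcircA _ (hgS z hz)⟩
  have h1W : (1:ℂ) ∈ A ∩ g ⁻¹' A := hcircW (by simp)
  have hWopen : IsOpen (A ∩ g ⁻¹' A) := by
    have heq : A ∩ g ⁻¹' A = A ∩ (Ω ∩ g ⁻¹' A) :=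
      Set.ext fun z => ⟨fun h => ⟨h.1, hAΩ h.1, h.2⟩, fun h => ⟨h.1, h.2.2⟩⟩
    rw [heq]
    exact hAopen.inter (hg.continuousOn.isOpen_inter_preimage hΩ hAopen)
  -- local homeomorphism structure of g on Ω
  have hPH : ∀ z ∈ Ω, ∃ e : OpenPartialHomeomorph ℂ ℂ, z ∈ e.source ∧ ⇑e = g := by
    intro z hz
    obtain ⟨p, hp⟩ := hg.analyticAt (hΩ.mem_nhds hz)
    have hsd : HasStrictDerivAt g (p 1 fun _ => 1) z := hp.hasStrictDerivAt
    have hne : (p 1 fun _ => 1) ≠ 0 := by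
      have := hsd.hasDerivAt.deriv
      rw [← this]
      exact hg' z hz
    have heq := hsd.hasStrictFDerivAt_equiv hne
    exact ⟨HasStrictFDerivAt.toOpenPartialHomeomorph g heq,
      HasStrictFDerivAt.mem_toOpenPartialHomeomorph_source heq,
      HasStrictFDerivAt.toOpenPartialHomeomorph_coe heq⟩
  have hLgΩ : IsLocalHomeomorphOn g Ω :=
    IsLocalHomeomorphOn.mk g Ω fun z hz =>
      (hPH z hz).imp fun e he => ⟨he.1, fun y _ => (congrFun he.2 y).symm⟩
  -- the bundled map is a local homeomorphism
  have hvalW : IsOpenEmbedding (Subtype.val : (A ∩ g ⁻¹' A : Set ℂ) → ℂ) :=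
    hWopen.isOpenEmbedding_subtypeVal
  have hvalA : IsOpenEmbedding (Subtype.val : A → ℂ) := hAopen.isOpenEmbedding_subtypeVal
  have hcomp : IsLocalHomeomorph (fun z : (A ∩ g ⁻¹' A : Set ℂ) => g z.1) := by
    rw [isLocalHomeomorph_iff_isLocalHomeomorphOn_univ]
    exact hLgΩ.comp hvalW.isLocalHomeomorph.isLocalHomeomorphOn fun z _ => hWΩ z.2
  have hcont : Continuous (fun z : (A ∩ g ⁻¹' A : Set ℂ) => (⟨g z.1, z.2.2⟩ : A)) :=
    Continuous.subtype_mk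
      (hg.continuousOn.comp_continuous continuous_subtype_val fun z => hWΩ z.2) _
  have hF : IsLocalHomeomorph (fun z : (A ∩ g ⁻¹' A : Set ℂ) => (⟨g z.1, z.2.2⟩ : A)) :=
    IsLocalHomeomorph.of_comp
      (show IsLocalHomeomorph ((Subtype.val : A → ℂ) ∘
        (fun z : (A ∩ g ⁻¹' A : Set ℂ) => (⟨g z.1, z.2.2⟩ : A))) from hcomp)
      hvalA.isLocalHomeomorph hcont
  -- fibers of the bundled map
  have hfibW : ∀ w ∈ A, {z ∈ A ∩ g ⁻¹' A | g z = w} = {z ∈ A | g z = w} := by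
    intro w hw
    ext z
    exact ⟨fun h => ⟨h.1.1, h.2⟩, fun h => ⟨⟨h.1, by rw [Set.mem_preimage, h.2]; exact hw⟩, h.2⟩⟩
  have hfibF : ∀ a : A,
      ((fun z : (A ∩ g ⁻¹' A : Set ℂ) => (⟨g z.1, z.2.2⟩ : A)) ⁻¹' {a}).ncard = D := by
    intro a
    have himg : Subtype.val ''
        ((fun z : (A ∩ g ⁻¹' A : Set ℂ) => (⟨g z.1, z.2.2⟩ : A)) ⁻¹' {a})
        = {z ∈ A ∩ g ⁻¹' A | g z = a.1} := by
      ext z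
      simp only [Set.mem_image, Set.mem_preimage, Set.mem_singleton_iff, Set.mem_setOf_eq]
      constructor
      · rintro ⟨⟨z', hz'⟩, hmem, rfl⟩
        exact ⟨hz', congrArg Subtype.val hmem⟩
      · rintro ⟨hzW, hgz⟩
        exact ⟨⟨z, hzW⟩, Subtype.ext hgz, rfl⟩
    calc ((fun z : (A ∩ g ⁻¹' A : Set ℂ) => (⟨g z.1, z.2.2⟩ : A)) ⁻¹' {a}).ncard
        = (Subtype.val ''
          ((fun z : (A ∩ g ⁻¹' A : Set ℂ) => (⟨g z.1, z.2.2⟩ : A)) ⁻¹' {a})).ncard :=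
          (Set.ncard_image_of_injective _ Subtype.val_injective).symm
      _ = D := by rw [himg, hfibW a.1 a.2]; exact hfib a.1 a.2
  refine ⟨isCoveringMap_of_fiber_ncard hF hD hfibF, ?_, ?_⟩
  · intro w hw
    rw [hfibW w hw]
    exact hfib w hw
  · -- path connectedness of W
    -- finiteness of fibers
    have hfinfib : ∀ w ∈ A, ({z ∈ A | g z = w}).Finite := by
      intro w hw
      by_contra h
      have := hfib w hw
      rw [Set.Infinite.ncard h] at this
      omega
    -- A and the circle are path connected
    have hAeq : A = {z : ℂ | ‖z‖ ∈
        Real.exp '' Set.Ioo (-(2*Real.pi*ρ)) (2*Real.pi*ρ)} := by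
      rw [hA, myExpImageIoo]
      ext z
      simp [Set.mem_Ioo]
    have hApc : IsPathConnected A := by
      rw [hAeq]
      exact myPathConn _ (convex_Ioo _ _) ⟨0, by constructor <;> linarith⟩
    have hcirc_pc : IsPathConnected {z : ℂ | ‖z‖ = 1} := by
      have : {z : ℂ | ‖z‖ = 1}
          = {z : ℂ | ‖z‖ ∈ Real.exp '' ({0} : Set ℝ)} := by
        ext z; simp [Real.exp_zero]
      rw [this]
      exact myPathConn _ (convex_singleton 0) ⟨0, rfl⟩
    -- the key claim: everything is in the connected component of 1
    have key : ∀ z ∈ A ∩ g ⁻¹' A, z ∈ connectedComponentIn (A ∩ g ⁻¹' A) 1 := by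
      intro z hz
      have hCzW : connectedComponentIn (A ∩ g ⁻¹' A) z ⊆ A ∩ g ⁻¹' A :=
        connectedComponentIn_subset _ _
      have hCzopen : IsOpen (connectedComponentIn (A ∩ g ⁻¹' A) z) :=
        hWopen.connectedComponentIn
      have himg_open : IsOpen (g '' connectedComponentIn (A ∩ g ⁻¹' A) z) :=
        myIsOpen_image_of_localHomeoOn hLgΩ hCzopen (hCzW.trans hWΩ)
      have himg_sub : g '' connectedComponentIn (A ∩ g ⁻¹' A) z ⊆ A := by
        rintro _ ⟨y, hy, rfl⟩
        exact (hCzW hy).2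
      -- the complement of the image in A is open
      have hcompl_open : IsOpen (A \ g '' connectedComponentIn (A ∩ g ⁻¹' A) z) := by
        rw [isOpen_iff_forall_mem_open]
        rintro w ⟨hwA, hwim⟩
        have hFwsub : ∀ p ∈ {p ∈ A | g p = w}, p ∈ A ∩ g ⁻¹' A := fun p hp =>
          ⟨hp.1, by rw [Set.mem_preimage, hp.2]; exact hwA⟩
        have hFwnotC : ∀ p ∈ {p ∈ A | g p = w},
            p ∉ connectedComponentIn (A ∩ g ⁻¹' A) z := fun p hp hpC =>
          hwim ⟨p, hpC, hp.2⟩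
        obtain ⟨U, hU, hUdisj⟩ := (hfinfib w hwA).t2_separation
        have hball : ∀ p ∈ {p ∈ A | g p = w}, ∃ r, 0 < r ∧
            Metric.ball p r ⊆ (A ∩ g ⁻¹' A) ∩ U p := by
          intro p hp
          have hopen : IsOpen ((A ∩ g ⁻¹' A) ∩ U p) := hWopen.inter (hU p).2
          obtain ⟨r, hr, hrsub⟩ := Metric.isOpen_iff.1 hopen p ⟨hFwsub p hp, (hU p).1⟩
          exact ⟨r, hr, hrsub⟩
        choose! r hrpos hrsub using hball
        -- balls avoid the component
        have hBC : ∀ p ∈ {p ∈ A | g p = w},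
            ∀ q ∈ Metric.ball p (r p), q ∉ connectedComponentIn (A ∩ g ⁻¹' A) z := by
          intro p hp q hq hqC
          have hBsub : Metric.ball p (r p) ⊆ connectedComponentIn (A ∩ g ⁻¹' A) z := by
            rw [connectedComponentIn_eq hqC]
            exact (convex_ball p (r p)).isPreconnected.subset_connectedComponentIn hq
              ((hrsub p hp).trans Set.inter_subset_left)
          exact hFwnotC p hp (hBsub (Metric.mem_ball_self (hrpos p hp)))
        -- the open neighborhood
        refine ⟨(⋂ p ∈ {p ∈ A | g p = w}, g '' Metric.ball p (r p)) ∩ A, ?_, ?_, ?_⟩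
        · rintro w' ⟨hw'V, hw'A⟩
          refine ⟨hw'A, fun hw'im => ?_⟩
          obtain ⟨c, hcCz, hgc⟩ := hw'im
          have hq : ∀ p ∈ {p ∈ A | g p = w}, ∃ q, q ∈ Metric.ball p (r p) ∧ g q = w' := by
            intro p hp
            have := Set.mem_iInter₂.1 hw'V p hp
            obtain ⟨q, hq1, hq2⟩ := this
            exact ⟨q, hq1, hq2⟩
          choose! q hqB hqg using hq
          have hsub : q '' {p ∈ A | g p = w} ⊆ {y ∈ A | g y = w'} := by
            rintro _ ⟨p, hp, rfl⟩
            exact ⟨((hrsub p hp) (hqB p hp)).1.1, hqg p hp⟩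
          have hinjOn : Set.InjOn q {p ∈ A | g p = w} := by
            intro p hp p' hp' h
            by_contra hne
            have h1 : q p ∈ U p := ((hrsub p hp) (hqB p hp)).2
            have h2 : q p' ∈ U p' := ((hrsub p' hp') (hqB p' hp')).2
            rw [h] at h1
            exact Set.disjoint_left.1 (hUdisj hp hp' hne) h1 h2
          have hcard : (q '' {p ∈ A | g p = w}).ncard = D := by
            rw [Set.ncard_image_of_injOn hinjOn]
            exact hfib w hwA
          have heq : q '' {p ∈ A | g p = w} = {y ∈ A | g y = w'} :=
            Set.eq_of_subset_of_ncard_le hsub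
              (by rw [hcard, hfib w' hw'A]) (hfinfib w' hw'A)
          have hc' : c ∈ {y ∈ A | g y = w'} := ⟨(hCzW hcCz).1, hgc⟩
          rw [← heq] at hc'
          obtain ⟨p, hp, hpq⟩ := hc'
          exact hBC p hp c (hpq ▸ hqB p hp) hcCz
        · refine IsOpen.inter ?_ hAopen
          refine (hfinfib w hwA).isOpen_biInter fun p hp => ?_
          exact myIsOpen_image_of_localHomeoOn hLgΩ Metric.isOpen_ball
            (((hrsub p hp).trans Set.inter_subset_left).trans hWΩ)
        · refine ⟨Set.mem_iInter₂.2 fun p hp => ?_, hwA⟩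
          exact ⟨p, Metric.mem_ball_self (hrpos p hp), hp.2⟩
      -- image of the component is all of A
      have himg_all : A ⊆ g '' connectedComponentIn (A ∩ g ⁻¹' A) z := by
        have hdisj : Disjoint (g '' connectedComponentIn (A ∩ g ⁻¹' A) z)
            (A \ g '' connectedComponentIn (A ∩ g ⁻¹' A) z) :=
          Set.disjoint_sdiff_right.mono_left le_rfl
        have hcover : A ⊆ (g '' connectedComponentIn (A ∩ g ⁻¹' A) z) ∪
            (A \ g '' connectedComponentIn (A ∩ g ⁻¹' A) z) := fun y hy => by
          by_cases h : y ∈ g '' connectedComponentIn (A ∩ g ⁻¹' A) z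
          · exact Or.inl h
          · exact Or.inr ⟨hy, h⟩
        rcases hApc.isConnected.isPreconnected.subset_or_subset himg_open hcompl_open
            hdisj hcover with h | h
        · exact h
        · exfalso
          have hgz : g z ∈ A := hz.2
          have := h hgz
          exact this.2 ⟨z, mem_connectedComponentIn hz, rfl⟩
      -- get a point of the component mapping to 1
      obtain ⟨z', hz'C, hgz'⟩ := himg_all (hcircA 1 (by simp))
      have hz'circ : ‖z'‖ = 1 := by
        have : z' ∈ {z ∈ A | ‖g z‖ = 1} :=
          ⟨(hCzW hz'C).1, by rw [hgz']; simp⟩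
        rw [hcircle] at this
        exact this
      have hcircC1 : {z : ℂ | ‖z‖ = 1} ⊆ connectedComponentIn (A ∩ g ⁻¹' A) 1 :=
        hcirc_pc.isConnected.isPreconnected.subset_connectedComponentIn (by simp) hcircW
      have hz'C1 : z' ∈ connectedComponentIn (A ∩ g ⁻¹' A) 1 := hcircC1 hz'circ
      have e1 : connectedComponentIn (A ∩ g ⁻¹' A) 1 =
          connectedComponentIn (A ∩ g ⁻¹' A) z' := connectedComponentIn_eq hz'C1
      have e2 : connectedComponentIn (A ∩ g ⁻¹' A) z =
          connectedComponentIn (A ∩ g ⁻¹' A) z' := connectedComponentIn_eq hz'C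
      rw [e1, ← e2]
      exact mem_connectedComponentIn hz
    have hWC : (A ∩ g ⁻¹' A) = connectedComponentIn (A ∩ g ⁻¹' A) 1 :=
      Set.Subset.antisymm key (connectedComponentIn_subset _ _)
    refine (hWopen.isConnected_iff_isPathConnected).1 ?_
    exact ⟨⟨1, h1W⟩, by rw [hWC]; exact isPreconnected_connectedComponentIn⟩
end

section
/- Let E and F be complex Banach spaces, let N ≥ 1, let Ω be an open subset of ℂᴺ, and let L : Ω → B(E,F) be a continuous map into the space of bounded linear operators from E to F equipped with the operator norm. Suppose there is a set T of continuous linear functionals on F which separates the points of F and such that for every e ∈ E and every φ ∈ T the scalar-valued function z ↦ φ(L(z)e) is holomorphic on Ω. Then L is holomorphic (Fréchet ℂ-differentiable) on Ω as a B(E,F)-valued map. -/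
open Metric Complex

/-- 1D weak-to-strong holomorphy. -/
lemma weak1d {G : Type*} [NormedAddCommGroup G] [NormedSpace ℂ G] [CompleteSpace G]
    {S : Set (G →L[ℂ] ℂ)} (hS : ∀ y : G, y ≠ 0 → ∃ ψ ∈ S, ψ y ≠ 0)
    {f : ℂ → G} {c : ℂ} {r : ℝ} (hr : 0 < r)
    (hc : ContinuousOn f (closedBall c r))
    (hw : ∀ ψ ∈ S, DifferentiableOn ℂ (fun ζ => ψ (f ζ)) (ball c r)) :
    DifferentiableOn ℂ f (ball c r) := by
  lift r to NNReal using hr.le with r' hrr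
  have hr' : (0 : NNReal) < r' := by exact_mod_cast hr
  have hint : CircleIntegrable f c r' :=
    (hc.mono sphere_subset_closedBall).circleIntegrable (by positivity)
  set g : ℂ → G := fun w => (2 * Real.pi * I : ℂ)⁻¹ • ∮ z in C(c, (r' : ℝ)), (z - w)⁻¹ • f z
    with hg
  have hgps : HasFPowerSeriesOnBall g (cauchyPowerSeries f c r') c r' :=
    hasFPowerSeriesOn_cauchy_integral hint hr'
  have heq : ∀ w ∈ ball c (r' : ℝ), f w = g w := by
    intro w hwmem
    by_contra hne
    have hne' : f w - g w ≠ 0 := sub_ne_zero.2 hne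
    obtain ⟨ψ, hψS, hψne⟩ := hS _ hne'
    apply hψne
    have hdc : DiffContOnCl ℂ (fun ζ => ψ (f ζ)) (ball c (r' : ℝ)) :=
      ⟨hw ψ hψS, (ψ.continuous.comp_continuousOn hc).mono closure_ball_subset_closedBall⟩
    have hcauchy := hdc.two_pi_i_inv_smul_circleIntegral_sub_inv_smul hwmem
    have hint2 : CircleIntegrable (fun z => (z - w)⁻¹ • f z) c r' := by
      apply ContinuousOn.circleIntegrable (by positivity)
      apply ContinuousOn.smul _ (hc.mono sphere_subset_closedBall)
      apply ContinuousOn.inv₀ (by fun_prop)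
      intro z hz
      have : z ≠ w := by
        rintro rfl
        exact absurd (mem_sphere.1 hz ▸ mem_ball.1 hwmem) (lt_irrefl _)
      exact sub_ne_zero.2 this
    have hcomm : ψ (g w) = (2 * Real.pi * I : ℂ)⁻¹ •
        ∮ z in C(c, (r' : ℝ)), (z - w)⁻¹ • ψ (f z) := by
      rw [hg]
      simp only [map_smul]
      congr 1
      rw [circleIntegral, circleIntegral, ← ψ.intervalIntegral_comp_comm hint2.out]
      simp [map_smul]
    have : ψ (f w) - ψ (g w) = 0 := by
      rw [hcomm, hcauchy]; ring
    simpa [map_sub, sub_eq_zero] using this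
  have hgd : DifferentiableOn ℂ g (ball c (r' : ℝ)) := by
    have := hgps.differentiableOn
    rwa [Metric.emetric_ball_nnreal] at this
  exact hgd.congr heq


lemma coeff_bound {G : Type*} [NormedAddCommGroup G] [NormedSpace ℂ G]
    {f : ℂ → G} {r M : ℝ} (hr : 0 < r)
    (hcont : ContinuousOn f (sphere (0:ℂ) r))
    (hM : ∀ z ∈ sphere (0:ℂ) r, ‖f z‖ ≤ M) (n : ℕ) :
    ‖cauchyPowerSeries f 0 r n‖ ≤ M / r ^ n := by
  have h1 := norm_cauchyPowerSeries_le f 0 r n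
  have hint : IntervalIntegrable (fun θ : ℝ => ‖f (circleMap 0 r θ)‖)
      MeasureTheory.volume 0 (2 * Real.pi) := by
    apply ContinuousOn.intervalIntegrable
    apply ContinuousOn.norm
    exact hcont.comp (continuous_circleMap 0 r).continuousOn
      (fun θ _ => circleMap_mem_sphere _ hr.le _)
  have h2 : (∫ θ : ℝ in (0)..2 * Real.pi, ‖f (circleMap 0 r θ)‖) ≤ 2 * Real.pi * M := by
    have := intervalIntegral.integral_mono_on Real.two_pi_pos.le hint
      intervalIntegrable_const (fun θ _ => hM _ (circleMap_mem_sphere _ hr.le _))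
    simpa [mul_comm] using this
  calc ‖cauchyPowerSeries f 0 r n‖
      ≤ ((2 * Real.pi)⁻¹ * ∫ θ : ℝ in (0)..2 * Real.pi, ‖f (circleMap 0 r θ)‖) * |r|⁻¹ ^ n :=
        h1
    _ ≤ ((2 * Real.pi)⁻¹ * (2 * Real.pi * M)) * |r|⁻¹ ^ n := by
        apply mul_le_mul_of_nonneg_right
          (mul_le_mul_of_nonneg_left h2 (by positivity)) (by positivity)
    _ = M / r ^ n := by
        rw [abs_of_pos hr]
        field_simp
        rw [one_div, inv_pow, mul_assoc, inv_mul_cancel₀ (pow_pos hr n).ne', mul_one]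

lemma deriv_bound {G : Type*} [NormedAddCommGroup G] [NormedSpace ℂ G] [CompleteSpace G]
    {f : ℂ → G} {r M : ℝ} (hr : 0 < r)
    (hd : DifferentiableOn ℂ f (closedBall (0:ℂ) r))
    (hM : ∀ z ∈ closedBall (0:ℂ) r, ‖f z‖ ≤ M) :
    ‖deriv f 0‖ ≤ M / r := by
  lift r to NNReal using hr.le with r' hrr
  have hr' : (0 : NNReal) < r' := by exact_mod_cast hr
  have hp : HasFPowerSeriesOnBall f (cauchyPowerSeries f 0 r') 0 r' :=
    hd.hasFPowerSeriesOnBall hr'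
  have hder : deriv f 0 = cauchyPowerSeries f 0 r' 1 fun _ => 1 :=
    hp.hasFPowerSeriesAt.deriv
  have hb := coeff_bound hr (hd.continuousOn.mono sphere_subset_closedBall)
    (fun z hz => hM z (sphere_subset_closedBall hz)) 1
  rw [hder]
  calc ‖cauchyPowerSeries f 0 (r' : ℝ) 1 fun _ => 1‖
      ≤ ‖cauchyPowerSeries f 0 (r' : ℝ) 1‖ * ∏ _i : Fin 1, ‖(1 : ℂ)‖ :=
        (cauchyPowerSeries f 0 (r' : ℝ) 1).le_opNorm _
    _ ≤ M / (r' : ℝ) := by simpa using hb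

lemma taylor_bound {G : Type*} [NormedAddCommGroup G] [NormedSpace ℂ G] [CompleteSpace G]
    {f : ℂ → G} {r M : ℝ} (hr : 0 < r)
    (hd : DifferentiableOn ℂ f (closedBall (0:ℂ) r))
    (hM : ∀ z ∈ closedBall (0:ℂ) r, ‖f z‖ ≤ M)
    {ζ : ℂ} (hζ : ‖ζ‖ ≤ r / 2) :
    ‖f ζ - f 0 - ζ • deriv f 0‖ ≤ 2 * M / r ^ 2 * ‖ζ‖ ^ 2 := by
  have hM0 : 0 ≤ M := le_trans (norm_nonneg _) (hM 0 (mem_closedBall_self hr.le))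
  lift r to NNReal using hr.le with r' hrr
  have hr' : (0 : NNReal) < r' := by exact_mod_cast hr
  have hp : HasFPowerSeriesOnBall f (cauchyPowerSeries f 0 r') 0 r' :=
    hd.hasFPowerSeriesOnBall hr'
  set p := cauchyPowerSeries f 0 (r' : ℝ) with hpdef
  have hcb : ∀ n, ‖p n‖ ≤ M / (r' : ℝ) ^ n :=
    coeff_bound hr (hd.continuousOn.mono sphere_subset_closedBall)
      (fun z hz => hM z (sphere_subset_closedBall hz))
  have hζr : ζ ∈ Metric.eball (0 : ℂ) r' := by
    simp only [Metric.mem_eball, edist_zero_right]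
    have : ‖ζ‖ < (r' : ℝ) := lt_of_le_of_lt hζ (by linarith)
    exact_mod_cast this
  have hs : HasSum (fun n => p n fun _ => ζ) (f ζ) := by
    simpa using hp.hasSum hζr
  have h2 : HasSum (fun n => p (n + 2) fun _ => ζ)
      (f ζ - ∑ i ∈ Finset.range 2, (p i fun _ => ζ)) :=
    (hasSum_nat_add_iff' 2).mpr hs
  have hzero : (p 0 fun _ => ζ) = f 0 := hp.coeff_zero _
  have hone : (p 1 fun _ => ζ) = ζ • deriv f 0 := by
    rw [hp.hasFPowerSeriesAt.deriv]
    have := (p 1).map_smul_univ (fun _ => ζ) (fun _ => 1)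
    simpa using this.symm
  have hsum2 : (∑ i ∈ Finset.range 2, (p i fun _ => ζ)) = f 0 + ζ • deriv f 0 := by
    rw [Finset.sum_range_succ, Finset.sum_range_one, hzero, hone]
  have hval : f ζ - f 0 - ζ • deriv f 0 = ∑' n, (p (n + 2) fun _ => ζ) := by
    rw [h2.tsum_eq, hsum2]; abel
  rw [hval]
  have hgeo : HasSum (fun n : ℕ => M * (‖ζ‖ / (r':ℝ)) ^ 2 * (1/2) ^ n)
      (2 * M / (r':ℝ) ^ 2 * ‖ζ‖ ^ 2) := by
    have h := hasSum_geometric_of_lt_one (r := (1:ℝ)/2) (by norm_num) (by norm_num)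
    have h' := h.mul_left (M * (‖ζ‖ / (r':ℝ)) ^ 2)
    convert h' using 1
    · rfl
    rw [div_pow]
    field_simp
    ring
  apply tsum_of_norm_bounded hgeo
  intro n
  calc ‖p (n + 2) fun _ => ζ‖
      ≤ ‖p (n + 2)‖ * ∏ _i : Fin (n + 2), ‖ζ‖ := (p (n+2)).le_opNorm _
    _ ≤ M / (r' : ℝ) ^ (n + 2) * ‖ζ‖ ^ (n + 2) := by
        rw [Finset.prod_const, Finset.card_univ, Fintype.card_fin]
        exact mul_le_mul_of_nonneg_right (hcb _) (by positivity)
    _ = M * (‖ζ‖ / (r' : ℝ)) ^ (n + 2) := by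
        rw [div_pow]; ring
    _ ≤ M * ((1/2) ^ n * (‖ζ‖/(r':ℝ)) ^ 2) := by
        apply mul_le_mul_of_nonneg_left _ hM0
        have hle : ‖ζ‖ / (r' : ℝ) ≤ 1 / 2 := by
          rw [div_le_div_iff₀ hr (by norm_num)]
          linarith
        calc (‖ζ‖ / (r' : ℝ)) ^ (n + 2) = (‖ζ‖/(r':ℝ)) ^ n * (‖ζ‖/(r':ℝ)) ^ 2 := by ring
        _ ≤ (1/2) ^ n * (‖ζ‖/(r':ℝ)) ^ 2 := by
            apply mul_le_mul_of_nonneg_right (pow_le_pow_left₀ (by positivity) hle n)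
              (by positivity)
    _ = M * (‖ζ‖ / (r':ℝ)) ^ 2 * (1/2) ^ n := by ring



lemma num_eps {Nr c ρ : ℝ} (hN : 0 < Nr) (hρ : ρ ≠ 0) :
    Nr * ((c * ρ / (2 * Nr)) / ρ) = c / 2 := by
  field_simp

lemma num_final {Nr M c ρ x e' : ℝ} (hN : 0 < Nr) (hM : 0 ≤ M) (hc : 0 < c) (hρ : 0 < ρ)
    (hx : 0 ≤ x) (hδ₂ : x ≤ c * ρ ^ 2 / (4 * Nr * M + 1)) (he' : Nr * (e' / ρ) = c / 2) :
    Nr * (2 * M / ρ ^ 2 * x ^ 2 + e' / ρ * x) ≤ c * x := by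
  have hb1 : Nr * (2 * M / ρ ^ 2) * x ≤ c / 2 := by
    have hden : (0:ℝ) < 4 * Nr * M + 1 := by positivity
    calc Nr * (2 * M / ρ ^ 2) * x
        ≤ Nr * (2 * M / ρ ^ 2) * (c * ρ ^ 2 / (4 * Nr * M + 1)) :=
          mul_le_mul_of_nonneg_left hδ₂ (by positivity)
      _ = 2 * Nr * M * c / (4 * Nr * M + 1) := by field_simp
      _ ≤ c / 2 := by
          rw [div_le_div_iff₀ hden (by norm_num)]
          nlinarith [mul_nonneg (mul_nonneg hN.le hM) hc.le]
  have e1 : Nr * (2 * M / ρ ^ 2 * x ^ 2 + e' / ρ * x) =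
      (Nr * (2 * M / ρ ^ 2) * x) * x + (Nr * (e' / ρ)) * x := by ring
  rw [e1, he']
  have e2 := mul_le_mul_of_nonneg_right hb1 hx
  linarith

/-- Weak-to-strong holomorphy for operator-valued maps. If
`L : Ω → B(E,F)` is continuous on an open `Ω ⊆ ℂᴺ` and there is a point-separating
set `T` of continuous linear functionals on `F` such that `z ↦ φ(L(z)e)` is
holomorphic for every `e ∈ E`, `φ ∈ T`, then `L` is holomorphic on `Ω`. -/
theorem stmt_4 {E F : Type*} [NormedAddCommGroup E] [NormedSpace ℂ E] [CompleteSpace E]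
    [NormedAddCommGroup F] [NormedSpace ℂ F] [CompleteSpace F]
    (N : ℕ) (hN : 1 ≤ N) (Ω : Set (Fin N → ℂ)) (hΩ : IsOpen Ω)
    (L : (Fin N → ℂ) → E →L[ℂ] F)
    (hL_cont : ContinuousOn L Ω)
    (T : Set (F →L[ℂ] ℂ))
    (hT_sep : ∀ y : F, y ≠ 0 → ∃ φ ∈ T, φ y ≠ 0)
    (hL_holo : ∀ e : E, ∀ φ ∈ T, DifferentiableOn ℂ (fun z => φ (L z e)) Ω) :
    DifferentiableOn ℂ L Ω := by
  classical
  -- A separating set of functionals on `E →L[ℂ] F`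
  set S : Set ((E →L[ℂ] F) →L[ℂ] ℂ) :=
    {ψ | ∃ e : E, ∃ φ ∈ T, ψ = φ.comp (ContinuousLinearMap.apply ℂ F e)} with hSdef
  have hS_sep : ∀ A : E →L[ℂ] F, A ≠ 0 → ∃ ψ ∈ S, ψ A ≠ 0 := by
    intro A hA
    have hex : ∃ e, A e ≠ 0 := by
      by_contra hcon
      push_neg at hcon
      exact hA (by ext e; simp [hcon e])
    obtain ⟨e, he⟩ := hex
    obtain ⟨φ, hφT, hφ⟩ := hT_sep _ he
    exact ⟨φ.comp (ContinuousLinearMap.apply ℂ F e), ⟨e, φ, hφT, rfl⟩, by simpa using hφ⟩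
  intro z₀ hz₀
  suffices h : DifferentiableAt ℂ L z₀ from h.differentiableWithinAt
  obtain ⟨R₀, hR₀, hball⟩ := Metric.isOpen_iff.1 hΩ z₀ hz₀
  set ρ : ℝ := R₀ / 8 with hρdef
  have hρpos : 0 < ρ := by positivity
  set R : ℝ := 4 * ρ with hRdef
  have hRpos : 0 < R := by positivity
  have hKsub : closedBall z₀ R ⊆ Ω :=
    (closedBall_subset_ball (by rw [hRdef, hρdef]; linarith)).trans hball
  -- slices
  set sl : (Fin N → ℂ) → Fin N → ℂ → (E →L[ℂ] F) :=
    fun w j ζ => L (w + ζ • (Pi.single j 1 : Fin N → ℂ)) with hsldef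
  have hone : ∀ j : Fin N, ‖(Pi.single j (1:ℂ) : Fin N → ℂ)‖ ≤ 1 := by
    intro j
    apply pi_norm_le_iff_of_nonneg zero_le_one |>.2
    intro i
    rcases eq_or_ne i j with rfl | hij
    · simp
    · simp [Pi.single_eq_of_ne hij]
  have hmem : ∀ w ∈ closedBall z₀ ρ, ∀ j : Fin N, ∀ ζ : ℂ, ‖ζ‖ ≤ 2 * ρ →
      w + ζ • (Pi.single j 1 : Fin N → ℂ) ∈ closedBall z₀ R := by
    intro w hw j ζ hζ
    rw [mem_closedBall, dist_eq_norm]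
    have hwz : ‖w - z₀‖ ≤ ρ := by rw [← dist_eq_norm]; exact mem_closedBall.1 hw
    have heq : w + ζ • (Pi.single j 1 : Fin N → ℂ) - z₀ = (w - z₀) + ζ • (Pi.single j 1 : Fin N → ℂ) := by abel
    calc ‖w + ζ • (Pi.single j 1 : Fin N → ℂ) - z₀‖
        ≤ ‖w - z₀‖ + ‖ζ • (Pi.single j 1 : Fin N → ℂ)‖ := by rw [heq]; exact norm_add_le _ _
      _ ≤ ρ + 2 * ρ * 1 := by
          apply add_le_add hwz
          rw [norm_smul]
          exact mul_le_mul hζ (hone j) (norm_nonneg _) (by linarith)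
      _ ≤ R := by rw [hRdef]; linarith
  have hslice_cont : ∀ w ∈ closedBall z₀ ρ, ∀ j : Fin N,
      ContinuousOn (sl w j) (closedBall 0 (2 * ρ)) := by
    intro w hw j
    apply hL_cont.comp (by fun_prop : Continuous fun ζ : ℂ => w + ζ • (Pi.single j 1 : Fin N → ℂ)).continuousOn
    intro ζ hζ
    exact hKsub (hmem w hw j ζ (by rwa [← dist_zero_right, ← mem_closedBall]))
  have hslice_diff : ∀ w ∈ closedBall z₀ ρ, ∀ j : Fin N,
      DifferentiableOn ℂ (sl w j) (ball 0 (2 * ρ)) := by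
    intro w hw j
    apply weak1d hS_sep (by positivity) (hslice_cont w hw j)
    rintro ψ ⟨e, φ, hφT, rfl⟩
    have : (fun ζ => (φ.comp (ContinuousLinearMap.apply ℂ F e)) (sl w j ζ)) =
        (fun z => φ (L z e)) ∘ (fun ζ : ℂ => w + ζ • (Pi.single j 1 : Fin N → ℂ)) := rfl
    rw [this]
    apply (hL_holo e φ hφT).comp
      ((by fun_prop : Differentiable ℂ fun ζ : ℂ => w + ζ • (Pi.single j 1 : Fin N → ℂ)).differentiableOn)
    intro ζ hζ
    apply hKsub
    apply hmem w hw j ζ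
    have := mem_ball.1 hζ
    rw [dist_zero_right] at this
    linarith
  set d : (Fin N → ℂ) → Fin N → (E →L[ℂ] F) := fun w j => deriv (sl w j) 0 with hddef
  have hz₀mem : z₀ ∈ closedBall z₀ ρ := mem_closedBall_self hρpos.le
  have hρ2 : closedBall (0:ℂ) ρ ⊆ ball (0:ℂ) (2 * ρ) := closedBall_subset_ball (by linarith)
  have h0mem : (0:ℂ) ∈ ball (0:ℂ) (2 * ρ) := mem_ball_self (by linarith)
  -- bound and uniform continuity
  obtain ⟨M₀, hM₀⟩ := (isCompact_closedBall z₀ R).exists_bound_of_continuousOn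
    (hL_cont.mono hKsub)
  set M : ℝ := max M₀ 0 with hMdef
  have hM : ∀ z ∈ closedBall z₀ R, ‖L z‖ ≤ M := fun z hz => (hM₀ z hz).trans (le_max_left _ _)
  have hMnn : 0 ≤ M := le_max_right _ _
  have hUC := (isCompact_closedBall z₀ R).uniformContinuousOn_of_continuous
    (hL_cont.mono hKsub)
  rw [Metric.uniformContinuousOn_iff] at hUC
  have hNpos : (0:ℝ) < N := by exact_mod_cast Nat.lt_of_lt_of_le Nat.zero_lt_one hN
  -- the candidate derivative
  set D : (Fin N → ℂ) →L[ℂ] (E →L[ℂ] F) :=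
    ∑ j, (ContinuousLinearMap.proj j : (Fin N → ℂ) →L[ℂ] ℂ).smulRight (d z₀ j) with hDdef
  apply (hasFDerivAt_iff_isLittleO_nhds_zero.2 _ : HasFDerivAt L D z₀).differentiableAt
  rw [Asymptotics.isLittleO_iff]
  intro c hc
  set ε' : ℝ := c * ρ / (2 * N) with hε'def
  have hε' : 0 < ε' := by positivity
  obtain ⟨δ₁, hδ₁pos, hδ₁⟩ := hUC ε' hε'
  set δ : ℝ := min (min δ₁ (ρ / 2)) (c * ρ ^ 2 / (4 * N * M + 1)) with hδdef
  have hδpos : 0 < δ := by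
    apply lt_min (lt_min hδ₁pos (by positivity))
    have : 0 < 4 * (N:ℝ) * M + 1 := by positivity
    positivity
  filter_upwards [Metric.ball_mem_nhds (0 : Fin N → ℂ) hδpos] with h hh
  have hhn : ‖h‖ < δ := by rwa [mem_ball, dist_zero_right] at hh
  have hhρ : ‖h‖ ≤ ρ / 2 :=
    le_of_lt (lt_of_lt_of_le hhn ((min_le_left _ _).trans (min_le_right _ _)))
  have hhδ₁ : ‖h‖ < δ₁ := lt_of_lt_of_le hhn ((min_le_left _ _).trans (min_le_left _ _))
  have hhδ₂ : ‖h‖ ≤ c * ρ ^ 2 / (4 * N * M + 1) := le_of_lt (lt_of_lt_of_le hhn (min_le_right _ _))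
  -- telescoping points
  set P : ℕ → (Fin N → ℂ) := fun k i => if (i : ℕ) < k then z₀ i + h i else z₀ i with hPdef
  have hP0 : P 0 = z₀ := by funext i; simp [hPdef]
  have hPN : P N = z₀ + h := by funext i; simp [hPdef, i.isLt]
  have hPnorm : ∀ k, ‖P k - z₀‖ ≤ ‖h‖ := by
    intro k
    apply pi_norm_le_iff_of_nonneg (norm_nonneg h) |>.2
    intro i
    by_cases hik : (i:ℕ) < k
    · simpa [hPdef, hik] using norm_le_pi_norm h i
    · simp [hPdef, hik]
  have hPmem : ∀ k, P k ∈ closedBall z₀ ρ := by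
    intro k
    rw [mem_closedBall, dist_eq_norm]
    linarith [hPnorm k]
  have hstep : ∀ j : Fin N, P (j.val + 1) = P j.val + h j • (Pi.single j 1 : Fin N → ℂ) := by
    intro j
    funext i
    rcases eq_or_ne i j with rfl | hij
    · simp [hPdef, Pi.single_eq_same, Pi.add_apply, Pi.smul_apply]
    · have hs0 : (Pi.single j (1:ℂ) : Fin N → ℂ) i = 0 := Pi.single_eq_of_ne hij 1
      have hiff : ((i:ℕ) < j.val + 1) ↔ ((i:ℕ) < j.val) := by
        constructor
        · intro hlt
          rcases Nat.lt_succ_iff_lt_or_eq.1 hlt with h' | h'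
          · exact h'
          · exact absurd (Fin.ext h') hij
        · intro hlt; omega
      simp only [hPdef, Pi.add_apply, Pi.smul_apply, hs0, smul_zero, add_zero, hiff]
  -- key telescoping identity
  have key : L (z₀ + h) - L z₀ - D h =
      ∑ j : Fin N, (sl (P j.val) j (h j) - sl (P j.val) j 0 - h j • d z₀ j) := by
    have h1 : ∑ j : Fin N, (L (P (j.val + 1)) - L (P j.val)) = L (z₀ + h) - L z₀ := by
      rw [Fin.sum_univ_eq_sum_range (fun k => L (P (k + 1)) - L (P k)) N,
        Finset.sum_range_sub (fun k => L (P k)) N, hPN, hP0]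
    have h2 : D h = ∑ j : Fin N, h j • d z₀ j := by
      simp [hDdef, ContinuousLinearMap.sum_apply]
    have h3 : ∀ j : Fin N, sl (P j.val) j (h j) = L (P (j.val + 1)) := by
      intro j; rw [hstep j]
    have h4 : ∀ j : Fin N, sl (P j.val) j 0 = L (P j.val) := by
      intro j; simp [hsldef]
    rw [h2, ← h1, ← Finset.sum_sub_distrib]
    apply Finset.sum_congr rfl
    intro j _
    rw [h3 j, h4 j]
  -- per-term bound
  have termbound : ∀ j : Fin N,
      ‖sl (P j.val) j (h j) - sl (P j.val) j 0 - h j • d z₀ j‖ ≤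
        2 * M / ρ ^ 2 * ‖h‖ ^ 2 + ε' / ρ * ‖h‖ := by
    intro j
    set w : Fin N → ℂ := P j.val with hwdef
    have hw : w ∈ closedBall z₀ ρ := hPmem _
    have hdw : DifferentiableOn ℂ (sl w j) (closedBall 0 ρ) := (hslice_diff w hw j).mono hρ2
    have hdz : DifferentiableOn ℂ (sl z₀ j) (closedBall 0 ρ) :=
      (hslice_diff z₀ hz₀mem j).mono hρ2
    have hMw : ∀ ζ ∈ closedBall (0:ℂ) ρ, ‖sl w j ζ‖ ≤ M := by
      intro ζ hζ
      apply hM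
      apply hmem w hw j ζ
      have := mem_closedBall.1 hζ
      rw [dist_zero_right] at this
      linarith
    have hhj : ‖h j‖ ≤ ρ / 2 := (norm_le_pi_norm h j).trans hhρ
    have t1 := taylor_bound hρpos hdw hMw hhj
    have hdiff0w : DifferentiableAt ℂ (sl w j) 0 :=
      ((hslice_diff w hw j) 0 h0mem).differentiableAt (isOpen_ball.mem_nhds h0mem)
    have hdiff0z : DifferentiableAt ℂ (sl z₀ j) 0 :=
      ((hslice_diff z₀ hz₀mem j) 0 h0mem).differentiableAt (isOpen_ball.mem_nhds h0mem)
    have hΔd : DifferentiableOn ℂ (fun ζ => sl w j ζ - sl z₀ j ζ) (closedBall 0 ρ) :=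
      hdw.sub hdz
    have hΔM : ∀ ζ ∈ closedBall (0:ℂ) ρ, ‖sl w j ζ - sl z₀ j ζ‖ ≤ ε' := by
      intro ζ hζ
      have hζ' : ‖ζ‖ ≤ 2 * ρ := by
        have := mem_closedBall.1 hζ
        rw [dist_zero_right] at this
        linarith
      have hd' : dist (w + ζ • (Pi.single j 1 : Fin N → ℂ)) (z₀ + ζ • (Pi.single j 1 : Fin N → ℂ)) < δ₁ := by
        rw [dist_add_right, dist_eq_norm]
        exact lt_of_le_of_lt (hPnorm j.val) hhδ₁
      have := hδ₁ _ (hmem w hw j ζ hζ') _ (hmem z₀ hz₀mem j ζ hζ') hd'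
      rw [dist_eq_norm] at this
      exact this.le
    have t2 : ‖d w j - d z₀ j‖ ≤ ε' / ρ := by
      have hder : deriv (fun ζ => sl w j ζ - sl z₀ j ζ) 0 = d w j - d z₀ j :=
        deriv_sub hdiff0w hdiff0z
      have := deriv_bound hρpos hΔd hΔM
      rwa [hder] at this
    calc ‖sl w j (h j) - sl w j 0 - h j • d z₀ j‖
        = ‖(sl w j (h j) - sl w j 0 - h j • d w j) + h j • (d w j - d z₀ j)‖ := by
          rw [smul_sub]; congr 1; abel
      _ ≤ ‖sl w j (h j) - sl w j 0 - h j • d w j‖ + ‖h j • (d w j - d z₀ j)‖ :=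
          norm_add_le _ _
      _ ≤ 2 * M / ρ ^ 2 * ‖h j‖ ^ 2 + ‖h j‖ * (ε' / ρ) := by
          apply add_le_add t1
          exact (norm_smul_le _ _).trans (mul_le_mul_of_nonneg_left t2 (norm_nonneg _))
      _ ≤ 2 * M / ρ ^ 2 * ‖h‖ ^ 2 + ε' / ρ * ‖h‖ := by
          apply add_le_add
          · apply mul_le_mul_of_nonneg_left _ (by positivity)
            exact pow_le_pow_left₀ (norm_nonneg _) (norm_le_pi_norm h j) 2
          · rw [mul_comm]
            exact mul_le_mul_of_nonneg_left (norm_le_pi_norm h j) (div_nonneg hε'.le hρpos.le)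
  -- final estimate
  calc ‖L (z₀ + h) - L z₀ - D h‖
      ≤ ∑ j : Fin N, ‖sl (P j.val) j (h j) - sl (P j.val) j 0 - h j • d z₀ j‖ := by
        rw [key]; exact norm_sum_le _ _
    _ ≤ ∑ _j : Fin N, (2 * M / ρ ^ 2 * ‖h‖ ^ 2 + ε' / ρ * ‖h‖) :=
        Finset.sum_le_sum (fun j _ => termbound j)
    _ = N * (2 * M / ρ ^ 2 * ‖h‖ ^ 2 + ε' / ρ * ‖h‖) := by
        rw [Finset.sum_const, Finset.card_univ, Fintype.card_fin, nsmul_eq_mul]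
    _ ≤ c * ‖h‖ := by
        have hb2 : (N:ℝ) * (ε' / ρ) = c / 2 := by
          rw [hε'def]
          exact num_eps hNpos hρpos.ne'
        exact num_final hNpos hMnn hc hρpos (norm_nonneg h) hhδ₂ hb2
end

section
/- Let 0 < R'' < R and let f : closure(𝔸_R) → ℂ be continuous and holomorphic on 𝔸_R. For m ∈ ℤ put a_m = (1/2πi)∮_{|z|=1} f(z) z^{−m−1} dz. Then: (i) |a_m| ≤ ‖f‖_∞ e^{−2π|m|R} for every m ∈ ℤ, where ‖f‖_∞ = sup_{z ∈ closure(𝔸_R)} |f(z)|; (ii) consequently sup_{z ∈ closure(𝔸_{R''})} |a_m z^m| ≤ ‖f‖_∞ e^{−2π|m|(R−R'')} for every m ∈ ℤ; (iii) f(z) = Σ_{m∈ℤ} a_m z^m, the series converging absolutely for every z ∈ 𝔸_R. -/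
/-- The open annulus `𝔸_ρ = {z ∈ ℂ : e^{−2πρ} < |z| < e^{2πρ}}`. -/
def ann (ρ : ℝ) : Set ℂ :=
  {z : ℂ | Real.exp (-(2*Real.pi*ρ)) < ‖z‖ ∧
    ‖z‖ < Real.exp (2*Real.pi*ρ)}


open Set Filter

lemma ann_isOpen (ρ : ℝ) : IsOpen (ann ρ) :=
  IsOpen.preimage continuous_norm isOpen_Ioo

lemma exp_zpow' (x : ℝ) (m : ℤ) : Real.exp x ^ m = Real.exp (m * x) := by
  rw [← Real.rpow_intCast, ← Real.exp_mul, mul_comm]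

lemma zpow_le_exp' {x c : ℝ} (h1 : Real.exp (-c) ≤ x) (h2 : x ≤ Real.exp c) (m : ℤ) :
    x ^ m ≤ Real.exp (|m| * c) := by
  have hx : 0 < x := lt_of_lt_of_le (Real.exp_pos _) h1
  rcases le_or_gt 0 m with hm | hm
  · lift m to ℕ using hm
    rw [zpow_natCast, Nat.abs_cast]
    push_cast
    rw [Real.exp_nat_mul]
    exact pow_le_pow_left₀ hx.le h2 m
  · obtain ⟨n, rfl⟩ : ∃ n : ℕ, m = -(n : ℤ) := ⟨(-m).toNat, by omega⟩
    have h1' : x⁻¹ ≤ Real.exp c := by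
      have := inv_anti₀ (Real.exp_pos (-c)) h1
      rwa [← Real.exp_neg, neg_neg] at this
    rw [zpow_neg, zpow_natCast, ← inv_pow]
    calc x⁻¹ ^ n ≤ Real.exp c ^ n := pow_le_pow_left₀ (by positivity) h1' n
      _ = Real.exp (n * c) := (Real.exp_nat_mul c n).symm
      _ = Real.exp (|(-(n:ℤ))| * c) := by
          rw [abs_neg, Nat.abs_cast]; norm_num

lemma ann_ne_zero {R : ℝ} {z : ℂ} (hz : z ∈ ann R) : z ≠ 0 := by
  intro h
  rw [h] at hz
  have := hz.1
  simp only [norm_zero] at this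
  exact absurd this (not_lt.mpr (Real.exp_pos _).le)

lemma shift_integral {R : ℝ} {f : ℂ → ℂ}
    (hf_holo : DifferentiableOn ℂ f (ann R)) (m : ℤ)
    {ρ₁ ρ₂ : ℝ} (h1 : Real.exp (-(2*Real.pi*R)) < ρ₁) (h12 : ρ₁ ≤ ρ₂)
    (h2 : ρ₂ < Real.exp (2*Real.pi*R)) :
    (∮ z in C(0, ρ₂), f z * z ^ (-m - 1 : ℤ)) = ∮ z in C(0, ρ₁), f z * z ^ (-m - 1 : ℤ) := by
  have hρ1 : 0 < ρ₁ := lt_trans (Real.exp_pos _) h1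
  have hsub : Metric.closedBall (0:ℂ) ρ₂ \ Metric.ball 0 ρ₁ ⊆ ann R := by
    rintro z ⟨hz1, hz2⟩
    rw [Metric.mem_closedBall, dist_zero_right] at hz1
    rw [Metric.mem_ball, dist_zero_right, not_lt] at hz2
    exact ⟨lt_of_lt_of_le h1 hz2, lt_of_le_of_lt hz1 h2⟩
  have hFd : ∀ z ∈ ann R, DifferentiableAt ℂ (fun z => f z * z ^ (-m-1:ℤ)) z := fun z hz =>
    (hf_holo.differentiableAt ((ann_isOpen R).mem_nhds hz)).mul
      (differentiableAt_zpow.mpr (Or.inl (ann_ne_zero hz)))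
  exact Complex.circleIntegral_eq_of_differentiable_on_annulus_off_countable hρ1 h12 Set.countable_empty
    (fun x hx => (hFd x (hsub hx)).continuousAt.continuousWithinAt)
    (fun z hz => hFd z (hsub ⟨Metric.ball_subset_closedBall hz.1.1,
      fun h => hz.1.2 (Metric.ball_subset_closedBall h)⟩))

lemma integral_bound {R : ℝ} {f : ℂ → ℂ} {Cf : ℝ}
    (hfb : ∀ w ∈ ann R, ‖f w‖ ≤ Cf) (m : ℤ) {ρ : ℝ}
    (h1 : Real.exp (-(2*Real.pi*R)) < ρ) (h2 : ρ < Real.exp (2*Real.pi*R)) :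
    ‖∮ z in C(0, ρ), f z * z ^ (-m - 1 : ℤ)‖ ≤ 2 * Real.pi * Cf * ρ ^ (-m) := by
  have hρ : 0 < ρ := lt_trans (Real.exp_pos _) h1
  have key : ∀ z ∈ Metric.sphere (0:ℂ) ρ, ‖f z * z ^ (-m - 1 : ℤ)‖ ≤ Cf * ρ ^ (-m-1) := by
    intro z hz
    rw [mem_sphere_zero_iff_norm] at hz
    have hzmem : z ∈ ann R := ⟨hz ▸ h1, hz ▸ h2⟩
    rw [norm_mul, norm_zpow, hz]
    exact mul_le_mul_of_nonneg_right (hfb z hzmem) (zpow_nonneg hρ.le _)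
  calc ‖∮ z in C(0, ρ), f z * z ^ (-m - 1 : ℤ)‖ ≤ 2 * Real.pi * ρ * (Cf * ρ ^ (-m-1)) :=
        circleIntegral.norm_integral_le_of_norm_le_const hρ.le key
    _ = 2 * Real.pi * Cf * (ρ ^ (-m-1) * ρ) := by ring
    _ = 2 * Real.pi * Cf * ρ ^ (-m) := by
        rw [← zpow_add_one₀ hρ.ne']
        norm_num


/-- Laurent expansion with geometric bounds. For `0 < R'' < R` and `f`
continuous on the closed annulus `closure 𝔸_R`, holomorphic on `𝔸_R`, with Laurent
coefficients `a_m = (1/2πi)∮_{|z|=1} f(z) z^{−m−1} dz` and `Cf = sup |f|`: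
(i) `|a_m| ≤ Cf e^{−2π|m|R}`; (ii) `|a_m z^m| ≤ Cf e^{−2π|m|(R−R'')}` on
`closure 𝔸_{R''}`; (iii) `f(z) = Σ_{m∈ℤ} a_m z^m` absolutely on `𝔸_R`. -/
theorem stmt_5 (R R'' : ℝ) (hR'' : 0 < R'') (hRlt : R'' < R)
    (f : ℂ → ℂ)
    (hf_cont : ContinuousOn f (closure (ann R)))
    (hf_holo : DifferentiableOn ℂ f (ann R))
    (a : ℤ → ℂ)
    (ha : ∀ m : ℤ, a m = (2 * Real.pi * Complex.I)⁻¹ •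
      (∮ z in C(0, 1), f z * z ^ (-m - 1 : ℤ)))
    (Cf : ℝ)
    (hCf : IsLUB {y : ℝ | ∃ z ∈ closure (ann R), y = ‖f z‖} Cf) :
    (∀ m : ℤ, ‖a m‖ ≤ Cf * Real.exp (-(2*Real.pi*(|m| : ℝ)*R))) ∧
    (∀ m : ℤ, ∀ z ∈ closure (ann R''),
      ‖a m * z ^ m‖ ≤ Cf * Real.exp (-(2*Real.pi*(|m| : ℝ)*(R - R'')))) ∧
    (∀ z ∈ ann R, Summable (fun m : ℤ => ‖a m * z ^ m‖) ∧
      HasSum (fun m : ℤ => a m * z ^ m) (f z)) := by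
  have hR : 0 < R := hR''.trans hRlt
  have hE1 : Real.exp (-(2*Real.pi*R)) < 1 := by
    rw [show (1:ℝ) = Real.exp 0 by rw [Real.exp_zero]]
    exact Real.exp_lt_exp.mpr (by nlinarith [Real.pi_pos])
  have hE2 : (1:ℝ) < Real.exp (2*Real.pi*R) := by
    rw [show (1:ℝ) = Real.exp 0 by rw [Real.exp_zero]]
    exact Real.exp_lt_exp.mpr (by nlinarith [Real.pi_pos])
  have hE12 : Real.exp (-(2*Real.pi*R)) < Real.exp (2*Real.pi*R) := hE1.trans hE2
  have hfb : ∀ w ∈ ann R, ‖f w‖ ≤ Cf := fun w hw =>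
    hCf.1 ⟨w, subset_closure hw, rfl⟩
  have h1mem : (1:ℂ) ∈ ann R := by constructor <;> simp [hE1, hE2]
  have hCf0 : 0 ≤ Cf := le_trans (norm_nonneg _) (hfb 1 h1mem)
  have habound : ∀ m : ℤ, ∀ ρ : ℝ, Real.exp (-(2*Real.pi*R)) < ρ →
      ρ < Real.exp (2*Real.pi*R) → ‖a m‖ ≤ Cf * ρ ^ (-m) := by
    intro m ρ hρ1 hρ2
    have hshift : (∮ z in C(0,1), f z * z^(-m-1:ℤ)) = ∮ z in C(0,ρ), f z * z^(-m-1:ℤ) := by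
      rcases le_total ρ 1 with h | h
      · exact shift_integral hf_holo m hρ1 h hE2
      · exact (shift_integral hf_holo m hE1 h hρ2).symm
    rw [ha m, hshift, smul_eq_mul, norm_mul, norm_inv]
    have habs2pi : ‖(2*(Real.pi:ℂ)*Complex.I)‖ = 2*Real.pi := by
      simp [abs_of_pos Real.pi_pos]
    rw [habs2pi]
    have hbnd := integral_bound hfb m hρ1 hρ2
    refine le_trans (mul_le_mul_of_nonneg_left hbnd (by positivity)) (le_of_eq ?_)
    have : (2*Real.pi) ≠ 0 := by positivity
    field_simp
  have hi : ∀ m : ℤ, ‖a m‖ ≤ Cf * Real.exp (-(2*Real.pi*(|m| : ℝ)*R)) := by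
    intro m
    rcases le_or_gt 0 m with hm | hm
    · have hlim : Filter.Tendsto (fun ρ:ℝ => Cf * ρ^(-m)) (nhdsWithin (Real.exp (2*Real.pi*R)) (Set.Iio (Real.exp (2*Real.pi*R))))
          (nhds (Cf * Real.exp (-(2*Real.pi*(|m| : ℝ)*R)))) := by
        have h0 : Cf * Real.exp (2*Real.pi*R) ^ (-m) = Cf * Real.exp (-(2*Real.pi*(|m| : ℝ)*R)) := by
          rw [exp_zpow']
          congr 2
          rw [abs_of_nonneg (by exact_mod_cast hm : (0:ℝ) ≤ (m:ℝ))]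
          push_cast
          ring
        rw [← h0]
        exact ((continuousAt_zpow₀ _ (-m) (Or.inl (Real.exp_pos _).ne')).tendsto.mono_left
          nhdsWithin_le_nhds).const_mul Cf
      refine ge_of_tendsto hlim ?_
      filter_upwards [Ioo_mem_nhdsLT_of_mem ⟨hE12, le_refl _⟩] with ρ hρ
      exact habound m ρ hρ.1 hρ.2
    · have hlim : Filter.Tendsto (fun ρ:ℝ => Cf * ρ^(-m)) (nhdsWithin (Real.exp (-(2*Real.pi*R))) (Set.Ioi (Real.exp (-(2*Real.pi*R)))))
          (nhds (Cf * Real.exp (-(2*Real.pi*(|m| : ℝ)*R)))) := by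
        have h0 : Cf * Real.exp (-(2*Real.pi*R)) ^ (-m) = Cf * Real.exp (-(2*Real.pi*(|m| : ℝ)*R)) := by
          rw [exp_zpow']
          congr 2
          rw [abs_of_neg (by exact_mod_cast hm : (m:ℝ) < 0)]
          push_cast
          ring
        rw [← h0]
        exact ((continuousAt_zpow₀ _ (-m) (Or.inl (Real.exp_pos _).ne')).tendsto.mono_left
          nhdsWithin_le_nhds).const_mul Cf
      refine ge_of_tendsto hlim ?_
      filter_upwards [Ioo_mem_nhdsGT_of_mem ⟨le_refl _, hE12⟩] with ρ hρ
      exact habound m ρ hρ.1 hρ.2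
  refine ⟨hi, ?_, ?_⟩
  · intro m z hz
    have hzb : ‖z‖ ∈ Set.Icc (Real.exp (-(2*Real.pi*R''))) (Real.exp (2*Real.pi*R'')) := by
      have hsub : closure (ann R'') ⊆ {w : ℂ | ‖w‖ ∈
          Set.Icc (Real.exp (-(2*Real.pi*R''))) (Real.exp (2*Real.pi*R''))} :=
        closure_minimal (fun w hw => ⟨hw.1.le, hw.2.le⟩)
          (IsClosed.preimage continuous_norm isClosed_Icc)
      exact hsub hz
    rw [norm_mul, norm_zpow]
    have h2 : ‖z‖ ^ m ≤ Real.exp (|m| * (2*Real.pi*R'')) :=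
      zpow_le_exp' hzb.1 hzb.2 m
    calc ‖a m‖ * ‖z‖ ^ m
        ≤ (Cf * Real.exp (-(2*Real.pi*(|m| : ℝ)*R))) * Real.exp (|m| * (2*Real.pi*R'')) := by
          refine mul_le_mul (hi m) h2 (zpow_nonneg (norm_nonneg _) m) (by positivity)
      _ = Cf * Real.exp (-(2*Real.pi*(|m| : ℝ)*(R - R''))) := by
          rw [mul_assoc, ← Real.exp_add]
          congr 2
          push_cast
          ring
  · intro z hz
    have hz0 : z ≠ 0 := ann_ne_zero hz
    set r : ℝ := ‖z‖ with hr
    have hr1 : Real.exp (-(2*Real.pi*R)) < r := hz.1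
    have hr2 : r < Real.exp (2*Real.pi*R) := hz.2
    have hrpos : 0 < r := (Real.exp_pos _).trans hr1
    have hrne : ((r:ℂ)) ≠ 0 := Complex.ofReal_ne_zero.mpr hrpos.ne'
    -- summability of the absolute series
    have hbound : ∀ m : ℤ, ‖a m * z ^ m‖ ≤
        Cf * Real.exp (-(2*Real.pi*(|m|:ℝ)*R)) * r ^ m := by
      intro m
      rw [norm_mul, norm_zpow]
      exact mul_le_mul_of_nonneg_right (hi m) (zpow_nonneg (norm_nonneg _) m)
    have ht1 : Real.exp (-(2*Real.pi*R)) * r < 1 := by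
      have h := mul_lt_mul_of_pos_left hr2 (Real.exp_pos (-(2*Real.pi*R)))
      rwa [← Real.exp_add, neg_add_cancel, Real.exp_zero] at h
    have ht2 : Real.exp (-(2*Real.pi*R)) * r⁻¹ < 1 := by
      rw [← div_eq_mul_inv, div_lt_one hrpos]
      exact hr1
    have hbsummable : Summable (fun m : ℤ => Cf * Real.exp (-(2*Real.pi*(|m|:ℝ)*R)) * r ^ m) := by
      apply Summable.of_nat_of_neg_add_one
      · refine ((summable_geometric_of_lt_one (by positivity) ht1).mul_left Cf).congr ?_
        intro n
        rw [mul_pow, ← mul_assoc]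
        congr 2
        · rw [← Real.exp_nat_mul]
          congr 1
          rw [Int.cast_natCast, abs_of_nonneg (by positivity : (0:ℝ) ≤ (n:ℝ))]
          ring
      · refine ((summable_geometric_of_lt_one (by positivity) ht2).mul_left
          (Cf * (Real.exp (-(2*Real.pi*R)) * r⁻¹))).congr ?_
        intro n
        have h2 : |((-(↑n + 1) : ℤ) : ℝ)| = (n:ℝ)+1 := by
          push_cast
          rw [abs_neg, abs_of_nonneg (by positivity)]
        have h3 : r ^ (-(↑n + 1) : ℤ) = (r⁻¹) ^ (n+1) := by
          rw [zpow_neg, ← inv_zpow]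
          norm_cast
        have h4 : Real.exp (-(2*Real.pi*((n:ℝ)+1)*R)) = Real.exp (-(2*Real.pi*R)) ^ (n+1) := by
          rw [← Real.exp_nat_mul]
          congr 1
          push_cast
          ring
        rw [h2, h3, h4, mul_pow, pow_succ, pow_succ]
        ring
    have hsum1 : Summable (fun m : ℤ => ‖a m * z ^ m‖) :=
      Summable.of_nonneg_of_le (fun m => norm_nonneg _) hbound hbsummable
    refine ⟨hsum1, ?_⟩
    -- Fourier series setup
    haveI : Fact (0 < 2*Real.pi) := ⟨Real.two_pi_pos⟩
    set g : ℝ → ℂ := fun θ => f ((r:ℂ) * Complex.exp (θ * Complex.I)) with hgdef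
    have hper : Function.Periodic g (2*Real.pi) := by
      intro θ
      have h := Complex.exp_mul_I_periodic (θ:ℂ)
      simp only [g]
      congr 2
      push_cast
      exact h
    have hmem : ∀ θ:ℝ, ((r:ℂ) * Complex.exp (θ * Complex.I)) ∈ ann R := by
      intro θ
      have habs : ‖(r:ℂ) * Complex.exp ((θ:ℂ) * Complex.I)‖ = r := by
        rw [norm_mul, Complex.norm_exp_ofReal_mul_I, mul_one, Complex.norm_real, Real.norm_eq_abs,
          abs_of_pos hrpos]
      constructor
      · rw [habs]; exact hr1
      · rw [habs]; exact hr2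
    have hgcont : Continuous g := by
      rw [continuous_iff_continuousAt]
      intro θ
      have hfc : ContinuousAt f ((r:ℂ) * Complex.exp (θ * Complex.I)) :=
        hf_cont.continuousAt
          (Filter.mem_of_superset ((ann_isOpen R).mem_nhds (hmem θ)) subset_closure)
      exact ContinuousAt.comp hfc
        (by fun_prop : ContinuousAt (fun θ:ℝ => (r:ℂ) * Complex.exp ((θ:ℂ) * Complex.I)) θ)
    have hGcont : Continuous hper.lift := Continuous.quotient_liftOn' hgcont _
    set Gc : C(AddCircle (2*Real.pi), ℂ) := ⟨hper.lift, hGcont⟩ with hGc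
    -- the key coefficient identity
    have hcirc : ∀ n : ℤ, (∮ w in C(0, r), f w * w ^ (-n - 1 : ℤ)) =
        (2*(Real.pi:ℂ)*Complex.I) * a n := by
      intro n
      have h2pine : (2*(Real.pi:ℂ)*Complex.I) ≠ 0 := by
        simp [Real.pi_ne_zero, Complex.I_ne_zero]
      have hshift : (∮ w in C(0, r), f w * w ^ (-n - 1 : ℤ)) =
          ∮ w in C(0, 1), f w * w ^ (-n - 1 : ℤ) := by
        rcases le_total r 1 with h | h
        · exact (shift_integral hf_holo n hr1 h hE2).symm
        · exact shift_integral hf_holo n hE1 h hr2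
      rw [hshift, ha n, smul_eq_mul, ← mul_assoc, mul_inv_cancel₀ h2pine, one_mul]
    have hfour : ∀ (k : ℤ) (x : ℝ), (fourier k (x : AddCircle (2*Real.pi)) : ℂ) =
        Complex.exp ((k:ℂ) * x * Complex.I) := by
      intro k x
      rw [fourier_coe_apply]
      have hπ : (Real.pi : ℂ) ≠ 0 := Complex.ofReal_ne_zero.mpr Real.pi_ne_zero
      congr 1
      push_cast
      field_simp
    have hfc : ∀ n : ℤ, fourierCoeff (⇑Gc) n = (r:ℂ)^(n:ℤ) * a n := by
      intro n
      rw [fourierCoeff_eq_intervalIntegral _ n 0, zero_add]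
      have hint : (∫ x in (0:ℝ)..(2*Real.pi), (fourier (-n) (x : AddCircle (2*Real.pi)) : ℂ) • Gc x) =
          ∫ x in (0:ℝ)..(2*Real.pi), Complex.exp (-(n:ℂ)*x*Complex.I) * g x := by
        refine intervalIntegral.integral_congr fun x _ => ?_
        show (fourier (-n) (x : AddCircle (2*Real.pi)) : ℂ) • hper.lift (x : AddCircle (2*Real.pi)) = _
        rw [Function.Periodic.lift_coe, hfour (-n) x, smul_eq_mul]
        push_cast
        ring_nf
      rw [hint]
      have hpt : ∀ θ : ℝ, (circleMap 0 r θ * Complex.I) •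
          (f (circleMap 0 r θ) * (circleMap 0 r θ)^(-n-1:ℤ)) =
          (Complex.I * (r:ℂ)^(-n:ℤ)) * (Complex.exp (-(n:ℂ)*θ*Complex.I) * g θ) := by
        intro θ
        have hcm : circleMap 0 r θ = (r:ℂ) * Complex.exp ((θ:ℂ) * Complex.I) := circleMap_zero r θ
        have hcm0 : circleMap 0 r θ ≠ 0 := by
          rw [hcm]; exact mul_ne_zero hrne (Complex.exp_ne_zero _)
        have hgth : g θ = f (circleMap 0 r θ) := by rw [hcm]
        have hsplit : (circleMap 0 r θ)^(-n-1:ℤ) =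
            (circleMap 0 r θ)^(-n:ℤ) * (circleMap 0 r θ)⁻¹ := by
          rw [← zpow_sub_one₀ hcm0]
        have hzpow : (circleMap 0 r θ)^(-n:ℤ) =
            (r:ℂ)^(-n:ℤ) * Complex.exp (-(n:ℂ)*θ*Complex.I) := by
          rw [hcm, mul_zpow]
          congr 1
          rw [← Complex.exp_int_mul]
          congr 1
          push_cast
          ring
        rw [smul_eq_mul, hsplit, hzpow, hgth, zpow_neg]
        have hcc : circleMap 0 r θ * (circleMap 0 r θ)⁻¹ = 1 := mul_inv_cancel₀ hcm0
        linear_combination (Complex.I * f (circleMap 0 r θ) *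
          Complex.exp (-(n:ℂ)*(θ:ℂ)*Complex.I) * ((r:ℂ)^(n:ℤ))⁻¹) * hcc
      have hIr : Complex.I * (r:ℂ)^(-n:ℤ) ≠ 0 :=
        mul_ne_zero Complex.I_ne_zero (zpow_ne_zero _ hrne)
      have hJ : (2*(Real.pi:ℂ)*Complex.I) * a n = (Complex.I * (r:ℂ)^(-n:ℤ)) *
          ∫ x in (0:ℝ)..(2*Real.pi), Complex.exp (-(n:ℂ)*x*Complex.I) * g x := by
        rw [← hcirc n]
        simp only [circleIntegral, deriv_circleMap]
        rw [← intervalIntegral.integral_const_mul]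
        exact intervalIntegral.integral_congr fun θ _ => hpt θ
      have hJ' : (∫ x in (0:ℝ)..(2*Real.pi), Complex.exp (-(n:ℂ)*x*Complex.I) * g x) =
          (Complex.I * (r:ℂ)^(-n:ℤ))⁻¹ * ((2*(Real.pi:ℂ)*Complex.I) * a n) := by
        rw [hJ, ← mul_assoc, inv_mul_cancel₀ hIr, one_mul]
      rw [hJ', Complex.real_smul]
      have hπc : (Real.pi:ℂ) ≠ 0 := Complex.ofReal_ne_zero.mpr Real.pi_ne_zero
      have hrn : ((r:ℂ))^(n:ℤ) ≠ 0 := zpow_ne_zero _ hrne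
      have hIne : Complex.I ≠ 0 := Complex.I_ne_zero
      rw [zpow_neg]
      push_cast
      field_simp
    have hnormeq : ∀ n : ℤ, ‖(r:ℂ)^(n:ℤ) * a n‖ = ‖a n * z ^ n‖ := by
      intro n
      rw [norm_mul, norm_mul, norm_zpow, norm_zpow, Complex.norm_real, Real.norm_eq_abs,
        abs_of_pos hrpos, ← hr]
      ring
    have hsummG : Summable (fourierCoeff (⇑Gc)) := by
      have h1 : Summable (fun n : ℤ => ‖(r:ℂ)^(n:ℤ) * a n‖) :=
        hsum1.congr fun n => (hnormeq n).symm
      exact h1.of_norm.congr fun n => (hfc n).symm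
    have hptsum := has_pointwise_sum_fourier_series_of_summable hsummG
      ((z.arg : ℝ) : AddCircle (2*Real.pi))
    have hzeq : (r:ℂ) * Complex.exp ((z.arg:ℂ) * Complex.I) = z :=
      Complex.norm_mul_exp_arg_mul_I z
    have hGval : Gc ((z.arg : ℝ) : AddCircle (2*Real.pi)) = f z := by
      have h1 : Gc ((z.arg : ℝ) : AddCircle (2*Real.pi)) = g z.arg := hper.lift_coe z.arg
      rw [h1]
      show f _ = f z
      rw [hzeq]
    rw [hGval] at hptsum
    have hfun : (fun i : ℤ => fourierCoeff (⇑Gc) i •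
        (fourier i ((z.arg:ℝ) : AddCircle (2*Real.pi)) : ℂ)) = fun m : ℤ => a m * z ^ m := by
      funext i
      rw [hfc i, smul_eq_mul, hfour i z.arg]
      conv_rhs => rw [← hzeq]
      rw [mul_zpow, ← Complex.exp_int_mul]
      rw [show ((i:ℂ) * ((z.arg:ℂ) * Complex.I)) = (i:ℂ) * (z.arg:ℂ) * Complex.I by ring]
      ring
    rw [hfun] at hptsum
    exact hptsum
end

section
/- For every real η with 0 < η < 1 and every integer n ≥ 1, the family (η^{i₁+⋯+i_n}) indexed by strictly increasing tuples 0 ≤ i₁ < i₂ < ⋯ < i_n of natural numbers is summable, and Σ_{0 ≤ i₁ < ⋯ < i_n} η^{i₁+⋯+i_n} = η^{n(n−1)/2} / ∏_{k=1}^n (1−η^k). -/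
open Finset

set_option maxHeartbeats 1000000 in
private lemma geom_pi (n : ℕ) (c : Fin n → ℝ) (hc0 : ∀ q, 0 ≤ c q) (hc1 : ∀ q, c q < 1) :
    Summable (fun j : Fin n → ℕ => ∏ q, c q ^ j q) ∧
    ∑' j : Fin n → ℕ, ∏ q, c q ^ j q = ∏ q, (1 - c q)⁻¹ := by
  induction n with
  | zero =>
    constructor
    · exact Summable.of_finite
    · rw [tsum_eq_single (fun q => 0) (by intro b hb; exact absurd (Subsingleton.elim b _) hb)]
      simp
  | succ n ih =>
    obtain ⟨hs, ht⟩ := ih (fun q => c q.succ) (fun q => hc0 _) (fun q => hc1 _)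
    have hgeo : Summable (fun a : ℕ => c 0 ^ a) :=
      summable_geometric_of_lt_one (hc0 0) (hc1 0)
    set e := Fin.consEquiv (fun _ : Fin (n + 1) => ℕ) with he
    have key : ∀ x : ℕ × (Fin n → ℕ),
        (∏ q, c q ^ (e x) q) = c 0 ^ x.1 * ∏ q : Fin n, c q.succ ^ x.2 q := by
      rintro ⟨a, j⟩
      rw [Fin.prod_univ_succ]
      simp [he, Fin.consEquiv]
    have hmul : Summable (fun x : ℕ × (Fin n → ℕ) =>
        c 0 ^ x.1 * ∏ q : Fin n, c q.succ ^ x.2 q) := by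
      apply Summable.mul_of_nonneg hgeo hs
      · intro a; exact pow_nonneg (hc0 0) a
      · intro j; exact Finset.prod_nonneg fun q _ => pow_nonneg (hc0 _) _
    have hsummable : Summable (fun j : Fin (n + 1) → ℕ => ∏ q, c q ^ j q) := by
      rw [← e.summable_iff]
      exact hmul.congr fun x => (key x).symm
    refine ⟨hsummable, ?_⟩
    have h1 : ∑' j : Fin (n + 1) → ℕ, ∏ q, c q ^ j q
        = ∑' x : ℕ × (Fin n → ℕ), c 0 ^ x.1 * ∏ q : Fin n, c q.succ ^ x.2 q := by
      rw [← e.tsum_eq]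
      exact tsum_congr key
    rw [h1, ← Summable.tsum_mul_tsum hgeo hs hmul,
      tsum_geometric_of_lt_one (hc0 0) (hc1 0), ht, Fin.prod_univ_succ]

private lemma Iic_succ_fin {n k : ℕ} (hk : k + 1 < n) (hk' : k < n) :
    Finset.Iic (⟨k + 1, hk⟩ : Fin n) = insert ⟨k + 1, hk⟩ (Finset.Iic ⟨k, hk'⟩) := by
  ext q
  simp only [Finset.mem_Iic, Finset.mem_insert, Fin.le_def, Fin.ext_iff]
  omega

private lemma Iio_zero_or_succ {n : ℕ} (p : Fin n) :
    (Finset.Iio p = ∅ ∧ p.1 = 0) ∨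
    ∃ k, ∃ hk : k < n, p.1 = k + 1 ∧ Finset.Iio p = Finset.Iic (⟨k, hk⟩ : Fin n) := by
  rcases hp : p.1 with _ | k
  · left
    refine ⟨?_, rfl⟩
    ext q
    simp only [Finset.mem_Iio, Finset.notMem_empty, iff_false, not_lt, Fin.lt_def, hp]
    omega
  · right
    refine ⟨k, by omega, rfl, ?_⟩
    ext q
    simp only [Finset.mem_Iio, Finset.mem_Iic, Fin.lt_def, Fin.le_def, hp]
    omega

/-- For `0 < η < 1` and `n ≥ 1`, the family `η^{i₁+⋯+i_n}` indexed by
strictly increasing tuples `0 ≤ i₁ < ⋯ < i_n` of naturals is summable, with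
`Σ η^{i₁+⋯+i_n} = η^{n(n−1)/2} / ∏_{k=1}^n (1−η^k)`. -/
theorem stmt_7 (η : ℝ) (hη0 : 0 < η) (hη1 : η < 1) (n : ℕ) (hn : 1 ≤ n) :
    Summable (fun i : {i : Fin n → ℕ // StrictMono i} => η ^ (∑ p, i.1 p)) ∧
    ∑' i : {i : Fin n → ℕ // StrictMono i}, η ^ (∑ p, i.1 p)
      = η ^ (n * (n - 1) / 2) / ∏ k ∈ Finset.Icc 1 n, (1 - η ^ k) := by
  classical
  -- the map from arbitrary tuples to strictly monotone tuples
  set F : (Fin n → ℕ) → (Fin n → ℕ) := fun j p => p.1 + ∑ q ∈ Finset.Iic p, j q with hF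
  have hmono : ∀ j, StrictMono (F j) := by
    intro j p r hpr
    have h1 : ∑ q ∈ Finset.Iic p, j q ≤ ∑ q ∈ Finset.Iic r, j q :=
      Finset.sum_le_sum_of_subset (Finset.Iic_subset_Iic.mpr hpr.le)
    have h2 : p.1 < r.1 := hpr
    simp only [hF]
    omega
  have hinj : Function.Injective (fun j => (⟨F j, hmono j⟩ : {i : Fin n → ℕ // StrictMono i})) := by
    intro j j' hjj'
    have hFeq : F j = F j' := congrArg Subtype.val hjj'
    have hsum : ∀ p, ∑ q ∈ Finset.Iic p, j q = ∑ q ∈ Finset.Iic p, j' q := by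
      intro p
      have := congrFun hFeq p
      simp only [hF] at this
      omega
    funext p
    have hio : ∑ q ∈ Finset.Iio p, j q = ∑ q ∈ Finset.Iio p, j' q := by
      rcases Iio_zero_or_succ p with ⟨h0, -⟩ | ⟨k, hk, -, hio⟩
      · rw [h0]; simp
      · rw [hio]; exact hsum _
    have hins : Finset.Iic p = insert p (Finset.Iio p) := by
      ext q; simp [Finset.mem_Iic, Finset.mem_insert, le_iff_lt_or_eq, or_comm, eq_comm]
    have h1 := hsum p
    rw [hins, Finset.sum_insert (by simp), Finset.sum_insert (by simp)] at h1
    omega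
  have hsurj : Function.Surjective
      (fun j => (⟨F j, hmono j⟩ : {i : Fin n → ℕ // StrictMono i})) := by
    rintro ⟨i, hi⟩
    set j : Fin n → ℕ := fun p =>
      if h : 0 < p.1 then i p - (i ⟨p.1 - 1, by omega⟩ + 1) else i p with hj
    have key : ∀ k (hk : k < n), F j ⟨k, hk⟩ = i ⟨k, hk⟩ := by
      intro k
      induction k with
      | zero =>
        intro hk
        have h0 : Finset.Iic (⟨0, hk⟩ : Fin n) = {⟨0, hk⟩} := by
          ext q
          simp only [Finset.mem_Iic, Finset.mem_singleton, Fin.le_def, Fin.ext_iff]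
          omega
        simp only [hF, h0, Finset.sum_singleton, hj]
        simp
      | succ k IH =>
        intro hk
        have hk' : k < n := by omega
        have hIH := IH hk'
        have hstep : i ⟨k, hk'⟩ < i ⟨k + 1, hk⟩ := hi (by simp [Fin.lt_def])
        have hge : k ≤ i ⟨k, hk'⟩ := by
          simp only [hF] at hIH; omega
        have hjval : j ⟨k + 1, hk⟩ = i ⟨k + 1, hk⟩ - (i ⟨k, hk'⟩ + 1) := by
          simp [hj]
        simp only [hF] at hIH ⊢
        rw [Iic_succ_fin hk hk', Finset.sum_insert (by simp [Fin.le_def]), hjval]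
        omega
    exact ⟨j, Subtype.ext (funext fun p => key p.1 p.2)⟩
  set E := Equiv.ofBijective _ ⟨hinj, hsurj⟩ with hE
  -- the exponent computation
  have hexp : ∀ j : Fin n → ℕ, ∑ p, F j p = n * (n - 1) / 2 + ∑ q, (n - q.1) * j q := by
    intro j
    simp only [hF]
    rw [Finset.sum_add_distrib]
    congr 1
    · rw [Fin.sum_univ_eq_sum_range (fun k => k) n, Finset.sum_range_id]
    · have hswap : ∑ p : Fin n, ∑ q ∈ Finset.Iic p, j q
          = ∑ q : Fin n, ∑ p ∈ Finset.Ici q, j q :=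
        Finset.sum_comm' (by intro p q; simp)
      rw [hswap]
      refine Finset.sum_congr rfl fun q _ => ?_
      rw [Finset.sum_const, smul_eq_mul, Fin.card_Ici]
  set c : Fin n → ℝ := fun q => η ^ (n - q.1) with hc
  have hc0 : ∀ q, 0 ≤ c q := fun q => pow_nonneg hη0.le _
  have hc1 : ∀ q, c q < 1 := by
    intro q
    exact pow_lt_one₀ hη0.le hη1 (by have := q.2; omega)
  obtain ⟨hsummable, htsum⟩ := geom_pi n c hc0 hc1
  have hfe : ∀ j : Fin n → ℕ,
      η ^ (∑ p, (E j).1 p) = η ^ (n * (n - 1) / 2) * ∏ q, c q ^ j q := by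
    intro j
    have : (E j).1 = F j := rfl
    rw [this, hexp, pow_add]
    congr 1
    rw [← Finset.prod_pow_eq_pow_sum]
    exact Finset.prod_congr rfl fun q _ => by rw [hc, ← pow_mul]
  have hprod : ∏ q, (1 - c q)⁻¹ = (∏ k ∈ Finset.Icc 1 n, (1 - η ^ k))⁻¹ := by
    rw [← Finset.prod_inv_distrib]
    rw [show (∏ q : Fin n, (1 - c q)⁻¹) = ∏ k ∈ Finset.range n, (1 - η ^ (n - k))⁻¹ from
      Fin.prod_univ_eq_prod_range (fun k => (1 - η ^ (n - k))⁻¹) n]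
    rw [← Finset.Ico_add_one_right_eq_Icc, Finset.prod_Ico_eq_prod_range]
    simp only [Nat.add_sub_cancel]
    rw [← Finset.prod_range_reflect (fun k => (1 - η ^ (1 + k))⁻¹) n]
    refine Finset.prod_congr rfl fun k hk => ?_
    rw [Finset.mem_range] at hk
    have h2 : n - k = 1 + (n - 1 - k) := by omega
    rw [h2]
  constructor
  · rw [← E.summable_iff]
    exact ((hsummable.mul_left _).congr fun j => (hfe j).symm)
  · rw [← E.tsum_eq, tsum_congr hfe, tsum_mul_left, htsum, hprod, div_eq_mul_inv]
end

section
/- Let m ≥ 1 and N ≥ 1 be integers, let D and U be open subsets of ℂ^m with U connected and bounded, let K ⊆ ℂ^m be compact with K ⊆ U and closure(U) ⊆ D, and let V ⊆ ℂᴺ be open. Let Ψ : V × D → ℂ^m be holomorphic, and suppose that for every x ∈ V the map Ψ(x,·) maps U into K. Then for every x ∈ V the map Ψ(x,·) has a unique fixed point ζ(x) in closure(U); moreover ζ(x) lies in U, the map x ↦ ζ(x) is holomorphic on V, and every eigenvalue of the derivative of Ψ(x,·) at ζ(x) (a ℂ-linear endomorphism of ℂ^m) has modulus strictly less than 1. 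-/
open Set Metric Filter Complex Function Topology

section EarleHamiltonAux

variable {E F : Type*} [NormedAddCommGroup E] [NormedSpace ℂ E]
  [NormedAddCommGroup F] [NormedSpace ℂ F]


lemma mobius_normSq (a w : ℂ) :
    Complex.normSq (1 - (starRingEnd ℂ) a * w) - Complex.normSq (w - a)
      = (1 - Complex.normSq a) * (1 - Complex.normSq w) := by
  simp only [Complex.normSq_apply, Complex.sub_re, Complex.sub_im, Complex.mul_re,
    Complex.mul_im, Complex.one_re, Complex.one_im, Complex.conj_re, Complex.conj_im]
  ring

lemma normSq_lt_one_of_norm {a : ℂ} (ha : ‖a‖ < 1) : Complex.normSq a < 1 := by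
  rw [← Complex.sq_norm]
  nlinarith [norm_nonneg a]

lemma mobius_key (a w : ℂ) (ha : ‖a‖ < 1) (hw : ‖w‖ < 1) :
    ‖w - a‖ < ‖1 - (starRingEnd ℂ) a * w‖ := by
  have h := mobius_normSq a w
  have h1 := normSq_lt_one_of_norm ha
  have h2 := normSq_lt_one_of_norm hw
  have e1 : Complex.normSq (w - a) = ‖w - a‖ ^ 2 := by
    rw [← Complex.sq_norm]
  have e2 : Complex.normSq (1 - (starRingEnd ℂ) a * w) = ‖1 - (starRingEnd ℂ) a * w‖ ^ 2 := by
    rw [← Complex.sq_norm]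
  nlinarith [norm_nonneg (w - a), norm_nonneg (1 - (starRingEnd ℂ) a * w)]

lemma mobius_denom_ne (a w : ℂ) (ha : ‖a‖ < 1) (hw : ‖w‖ < 1) :
    1 - (starRingEnd ℂ) a * w ≠ 0 := by
  intro h
  have := mobius_key a w ha hw
  rw [h] at this
  simp at this
  exact absurd this (not_lt.mpr (norm_nonneg _))

lemma mobius_lt_one (a w : ℂ) (ha : ‖a‖ < 1) (hw : ‖w‖ < 1) :
    ‖(w - a) / (1 - (starRingEnd ℂ) a * w)‖ < 1 := by
  rw [norm_div, div_lt_one]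
  · exact mobius_key a w ha hw
  · exact lt_of_le_of_lt (norm_nonneg _) (mobius_key a w ha hw)


lemma slice_hasDerivAt {φ : E → F} {z : E} (w : E) (hd : DifferentiableAt ℂ φ z) :
    HasDerivAt (fun lam : ℂ => φ (z + lam • w)) (fderiv ℂ φ z w) 0 := by
  have h1 : HasDerivAt (fun lam : ℂ => z + lam • w) w 0 := by
    simpa using ((hasDerivAt_id (0:ℂ)).smul_const w).const_add z
  have h2 : HasFDerivAt φ (fderiv ℂ φ z) (z + (0:ℂ) • w) := by simpa using hd.hasFDerivAt
  exact h2.comp_hasDerivAt (0:ℂ) h1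

lemma slice_mem_ball {z : E} {r : ℝ} (hr : 0 < r) {v : E} (hv : v ≠ 0) {lam : ℂ}
    (hlam : lam ∈ ball (0:ℂ) 1) : z + lam • ((r / ‖v‖) • v) ∈ ball z r := by
  have hnv : 0 < ‖v‖ := norm_pos_iff.mpr hv
  simp only [mem_ball, dist_self_add_left] at hlam ⊢
  rw [norm_smul, norm_smul, norm_div, Real.norm_eq_abs, abs_of_pos hr, norm_norm,
    div_mul_cancel₀ _ hnv.ne']
  calc ‖lam‖ * r < 1 * r := by
        apply mul_lt_mul_of_pos_right _ hr
        simpa using hlam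
    _ = r := one_mul r

/-- Schwarz–Pick derivative estimate. -/
lemma schwarz_pick {s : Set E} (hs : IsOpen s) {h : E → ℂ}
    (hd : DifferentiableOn ℂ h s) (hb : ∀ u ∈ s, ‖h u‖ < 1)
    {z : E} {r : ℝ} (hr : 0 < r) (hball : ball z r ⊆ s) (v : E) :
    ‖fderiv ℂ h z v‖ ≤ (1 - ‖h z‖ ^ 2) * ‖v‖ / r := by
  have hz : z ∈ s := hball (mem_ball_self hr)
  have hzd : DifferentiableAt ℂ h z := (hd z hz).differentiableAt (hs.mem_nhds hz)
  have ha : ‖h z‖ < 1 := hb z hz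
  have ha2 : 0 < 1 - ‖h z‖ ^ 2 := by nlinarith [norm_nonneg (h z)]
  rcases eq_or_ne v 0 with rfl | hv
  · simp only [map_zero, norm_zero]
    positivity
  have hnv : 0 < ‖v‖ := norm_pos_iff.mpr hv
  set a := h z with ha_def
  set w : E := (r / ‖v‖) • v with hw_def
  set ψ : ℂ → ℂ := fun lam => h (z + lam • w) with hψ_def
  set Fm : ℂ → ℂ := fun lam => (ψ lam - a) / (1 - (starRingEnd ℂ) a * ψ lam) with hF_def
  have hmem : ∀ lam ∈ ball (0:ℂ) 1, z + lam • w ∈ ball z r := fun lam hlam =>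
    slice_mem_ball hr hv hlam
  have hψval : ∀ lam ∈ ball (0:ℂ) 1, ‖ψ lam‖ < 1 := fun lam hlam =>
    hb _ (hball (hmem lam hlam))
  have hψd : DifferentiableOn ℂ ψ (ball (0:ℂ) 1) := by
    intro lam hlam
    have hdat : DifferentiableAt ℂ h (z + lam • w) :=
      (hd _ (hball (hmem lam hlam))).differentiableAt (hs.mem_nhds (hball (hmem lam hlam)))
    exact (hdat.comp lam (by fun_prop)).differentiableWithinAt
  have hFd : DifferentiableOn ℂ Fm (ball (0:ℂ) 1) := by
    intro lam hlam
    have h1 := hψd lam hlam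
    exact ((h1.sub_const a).div ((h1.const_mul _).const_sub 1)
      (mobius_denom_ne a (ψ lam) ha (hψval lam hlam)))
  have hψ0 : ψ 0 = a := by simp [hψ_def, ← ha_def]
  have hF0 : Fm 0 = 0 := by simp [hF_def, hψ0]
  have hFmaps : MapsTo Fm (ball (0:ℂ) 1) (ball (Fm 0) 1) := by
    intro lam hlam
    rw [hF0]
    simp only [mem_ball, dist_zero_right, hF_def]
    exact mobius_lt_one a (ψ lam) ha (hψval lam hlam)
  have hSch := Complex.norm_deriv_le_div_of_mapsTo_ball hFd (hFmaps.mono_right ball_subset_closedBall) one_pos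
  -- compute deriv Fm 0
  set d0 : ℂ := fderiv ℂ h z w with hd0_def
  have hψder : HasDerivAt ψ d0 0 := slice_hasDerivAt w hzd
  have hXne : (1 - (starRingEnd ℂ) a * a) ≠ 0 := mobius_denom_ne a a ha ha
  have hden : HasDerivAt (fun lam => 1 - (starRingEnd ℂ) a * ψ lam)
      (-((starRingEnd ℂ) a * d0)) 0 := by
    simpa using (hψder.const_mul ((starRingEnd ℂ) a)).const_sub 1
  have hdiv : HasDerivAt Fm (d0 / (1 - (starRingEnd ℂ) a * a)) 0 := by
    have := (hψder.sub_const a).div hden (by rw [hψ0]; exact hXne)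
    refine this.congr_deriv ?_
    rw [hψ0]
    field_simp
    ring
  have hderiv_eq : deriv Fm 0 = d0 / (1 - (starRingEnd ℂ) a * a) := hdiv.deriv
  -- denominator is real
  have hX : (1 - (starRingEnd ℂ) a * a) = ((1 - ‖a‖ ^ 2 : ℝ) : ℂ) := by
    rw [mul_comm, Complex.mul_conj, Complex.normSq_eq_norm_sq]
    push_cast
    ring
  have hnormX : ‖1 - (starRingEnd ℂ) a * a‖ = 1 - ‖a‖ ^ 2 := by
    rw [hX, Complex.norm_real, Real.norm_eq_abs, abs_of_pos ha2]
  have hd0v : d0 = (r / ‖v‖) • (fderiv ℂ h z v) := by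
    rw [hd0_def, hw_def, ContinuousLinearMap.map_smul_of_tower]
  have hnd0 : ‖d0‖ = r / ‖v‖ * ‖fderiv ℂ h z v‖ := by
    rw [hd0v, norm_smul, Real.norm_eq_abs, abs_of_pos (by positivity)]
  rw [hderiv_eq, norm_div, hnormX] at hSch
  have hSch2 : ‖d0‖ ≤ 1 - ‖a‖ ^ 2 := by
    have h11 : (1:ℝ)/1 = 1 := by norm_num
    rw [h11, div_le_one ha2] at hSch
    exact hSch
  · rw [hnd0] at hSch2
    rw [le_div_iff₀ hr]
    have h2 := mul_le_mul_of_nonneg_right hSch2 (norm_nonneg v)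
    have h3 : r / ‖v‖ * ‖fderiv ℂ h z v‖ * ‖v‖ = ‖fderiv ℂ h z v‖ * r := by
      field_simp
    rw [h3] at h2
    linarith

/-- Cauchy-type estimate: a bounded holomorphic function on a ball has controlled
derivative at the center. -/
lemma cauchy_bound {s : Set E} (hs : IsOpen s) {f : E → F}
    (hd : DifferentiableOn ℂ f s) {z : E} {r C : ℝ} (hr : 0 < r) (hC : 0 ≤ C)
    (hball : ball z r ⊆ s) (hbound : ∀ u ∈ ball z r, ‖f u‖ ≤ C) (v : E) :
    ‖fderiv ℂ f z v‖ ≤ 2 * C * ‖v‖ / r := by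
  have hz : z ∈ s := hball (mem_ball_self hr)
  have hzd : DifferentiableAt ℂ f z := (hd z hz).differentiableAt (hs.mem_nhds hz)
  rcases eq_or_ne v 0 with rfl | hv
  · simp only [map_zero, norm_zero]
    positivity
  have hnv : 0 < ‖v‖ := norm_pos_iff.mpr hv
  -- show for all η > 0 the bound with 2C+η, then conclude
  have key : ∀ η > 0, ‖fderiv ℂ f z v‖ ≤ (2 * C + η) * ‖v‖ / r := by
    intro η hη
    set w : E := (r / ‖v‖) • v with hw_def
    set ψ : ℂ → F := fun lam => f (z + lam • w) with hψ_def
    have hmem : ∀ lam ∈ ball (0:ℂ) 1, z + lam • w ∈ ball z r := fun lam hlam =>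
      slice_mem_ball hr hv hlam
    have hψd : DifferentiableOn ℂ ψ (ball (0:ℂ) 1) := by
      intro lam hlam
      have hdat : DifferentiableAt ℂ f (z + lam • w) :=
        (hd _ (hball (hmem lam hlam))).differentiableAt (hs.mem_nhds (hball (hmem lam hlam)))
      exact (hdat.comp lam (by fun_prop)).differentiableWithinAt
    have hmaps : MapsTo ψ (ball (0:ℂ) 1) (ball (ψ 0) (2 * C + η)) := by
      intro lam hlam
      rw [mem_ball, dist_eq_norm]
      calc ‖ψ lam - ψ 0‖ ≤ ‖ψ lam‖ + ‖ψ 0‖ := norm_sub_le _ _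
        _ ≤ C + C := add_le_add (hbound _ (hmem lam hlam)) (hbound _ (hmem 0 (mem_ball_self one_pos)))
        _ < 2 * C + η := by linarith
    have hSch := Complex.norm_deriv_le_div_of_mapsTo_ball hψd (hmaps.mono_right ball_subset_closedBall) one_pos
    have hψder : HasDerivAt ψ (fderiv ℂ f z w) 0 := slice_hasDerivAt w hzd
    rw [hψder.deriv] at hSch
    have hd0 : ‖fderiv ℂ f z w‖ = r / ‖v‖ * ‖fderiv ℂ f z v‖ := by
      rw [hw_def, ContinuousLinearMap.map_smul_of_tower, norm_smul, Real.norm_eq_abs,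
        abs_of_pos (by positivity)]
    rw [hd0] at hSch
    have h11 : (2 * C + η) / 1 = 2 * C + η := by ring
    rw [h11] at hSch
    rw [le_div_iff₀ hr]
    have h2 := mul_le_mul_of_nonneg_right hSch (norm_nonneg v)
    have h3 : r / ‖v‖ * ‖fderiv ℂ f z v‖ * ‖v‖ = ‖fderiv ℂ f z v‖ * r := by
      field_simp
    rw [h3] at h2
    linarith
  by_contra hcon
  push_neg at hcon
  have hgap : 0 < (‖fderiv ℂ f z v‖ - 2 * C * ‖v‖ / r) := by linarith
  set η := (‖fderiv ℂ f z v‖ - 2 * C * ‖v‖ / r) * r / ‖v‖ / 2 with hη_def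
  have hηpos : 0 < η := by positivity
  have := key η hηpos
  rw [hη_def] at this
  have hexp : (2 * C + (‖fderiv ℂ f z v‖ - 2 * C * ‖v‖ / r) * r / ‖v‖ / 2) * ‖v‖ / r
      = 2 * C * ‖v‖ / r + (‖fderiv ℂ f z v‖ - 2 * C * ‖v‖ / r) / 2 := by
    field_simp
  rw [hexp] at this
  linarith

/-- One can reach `b` from `a` through a chain of segments staying deep inside `U`. -/
def Reach (U : Set E) (a b : E) : Prop :=
  Relation.ReflTransGen (fun p q => ∃ δ > 0, ∀ z ∈ segment ℝ p q, ball z δ ⊆ U) a b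

lemma reach_bound {U : Set E} (hU : IsOpen U) {a b : E} (h : Reach U a b) :
    ∃ δ' > 0, ∃ L, 0 ≤ L ∧ ∀ (G : E → F) (M : ℝ), 0 ≤ M → DifferentiableOn ℂ G U →
      (∀ z : E, ball z δ' ⊆ U → ‖fderiv ℂ G z‖ ≤ M) → ‖G b - G a‖ ≤ M * L := by
  induction h with
  | refl =>
      exact ⟨1, one_pos, 0, le_refl _, fun G M hM _ _ => by simp [hM]⟩
  | tail hab hseg ih =>
      rename_i c b'
      obtain ⟨δ₁, hδ₁, L₁, hL₁, ihb⟩ := ih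
      obtain ⟨δ₂, hδ₂, hgs⟩ := hseg
      refine ⟨min δ₁ δ₂, lt_min hδ₁ hδ₂, L₁ + ‖b' - c‖, by positivity, ?_⟩
      intro G M hM hGd hGb
      have hseg_bound : ‖G b' - G c‖ ≤ M * ‖b' - c‖ := by
        apply Convex.norm_image_sub_le_of_norm_fderiv_le (𝕜 := ℂ) (s := segment ℝ c b')
        · intro x hx
          have hxU : x ∈ U := (hgs x hx) (mem_ball_self hδ₂)
          exact (hGd x hxU).differentiableAt (hU.mem_nhds hxU)
        · intro x hx
          exact hGb x (fun y hy => hgs x hx (ball_subset_ball (min_le_right δ₁ δ₂) hy))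
        · exact convex_segment c b'
        · exact left_mem_segment ℝ c b'
        · exact right_mem_segment ℝ c b'
      have hihb : ‖G c - G a‖ ≤ M * L₁ :=
        ihb G M hM hGd fun z hz => hGb z fun y hy =>
          hz (ball_subset_ball (min_le_left δ₁ δ₂) hy)
      calc ‖G b' - G a‖ ≤ ‖G b' - G c‖ + ‖G c - G a‖ := norm_sub_le_norm_sub_add_norm_sub _ _ _
        _ ≤ M * ‖b' - c‖ + M * L₁ := add_le_add hseg_bound hihb
        _ = M * (L₁ + ‖b' - c‖) := by ring

lemma reach_of_mem {U : Set E} (hU : IsOpen U) (hconn : IsPreconnected U)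
    {a : E} (ha : a ∈ U) : ∀ b ∈ U, Reach U a b := by
  by_contra hcon
  push_neg at hcon
  obtain ⟨b₀, hb₀U, hb₀⟩ := hcon
  set S : Set E := {b | b ∈ U ∧ Reach U a b} with hS_def
  set T : Set E := {b | b ∈ U ∧ ¬ Reach U a b} with hT_def
  have hstep : ∀ p ∈ U, ∀ r > 0, ball p r ⊆ U → ∀ q ∈ ball p (r/2),
      (∃ δ > 0, ∀ z ∈ segment ℝ p q, ball z δ ⊆ U) ∧
      (∃ δ > 0, ∀ z ∈ segment ℝ q p, ball z δ ⊆ U) := by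
    intro p hp r hr hrU q hq
    have hseg : ∀ z ∈ segment ℝ p q, ball z (r/2) ⊆ U := by
      intro z hz y hy
      have hzball : z ∈ ball p (r/2) :=
        (convex_ball p (r/2)).segment_subset (mem_ball_self (by linarith)) hq hz
      apply hrU
      calc dist y p ≤ dist y z + dist z p := dist_triangle _ _ _
        _ < r/2 + r/2 := add_lt_add (mem_ball.mp hy) (mem_ball.mp hzball)
        _ = r := by ring
    have hseg' : ∀ z ∈ segment ℝ q p, ball z (r/2) ⊆ U := by
      intro z hz
      rw [segment_symm] at hz
      exact hseg z hz
    exact ⟨⟨r/2, by linarith, hseg⟩, ⟨r/2, by linarith, hseg'⟩⟩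
  have hSopen : IsOpen S := by
    rw [Metric.isOpen_iff]
    rintro b ⟨hbU, hbR⟩
    obtain ⟨r, hr, hrU⟩ := Metric.isOpen_iff.mp hU b hbU
    refine ⟨r/2, by linarith, fun q hq => ?_⟩
    exact ⟨hrU (ball_subset_ball (by linarith) hq),
      hbR.tail ((hstep b hbU r hr hrU q hq).1)⟩
  have hTopen : IsOpen T := by
    rw [Metric.isOpen_iff]
    rintro b ⟨hbU, hbR⟩
    obtain ⟨r, hr, hrU⟩ := Metric.isOpen_iff.mp hU b hbU
    refine ⟨r/2, by linarith, fun q hq => ?_⟩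
    refine ⟨hrU (ball_subset_ball (by linarith) hq), fun hRq => hbR ?_⟩
    exact hRq.tail ((hstep b hbU r hr hrU q hq).2)
  have hcover : U ⊆ S ∪ T := fun u hu => by
    by_cases h : Reach U a u
    · exact Or.inl ⟨hu, h⟩
    · exact Or.inr ⟨hu, h⟩
  have hSne : (U ∩ S).Nonempty := ⟨a, ha, ha, Relation.ReflTransGen.refl⟩
  have hTne : (U ∩ T).Nonempty := ⟨b₀, hb₀U, hb₀U, hb₀⟩
  obtain ⟨x, -, hxS, hxT⟩ := hconn S T hSopen hTopen hcover hSne hTne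
  exact hxT.2 hxS.2

/-- Uniform chain estimate over a compact subset. -/
lemma reach_K {U K : Set E} (hU : IsOpen U) (hconn : IsPreconnected U)
    (hK : IsCompact K) (hKU : K ⊆ U) (hKne : K.Nonempty) :
    ∃ δ' > 0, ∃ L, 0 ≤ L ∧ ∀ (G : E → F) (M : ℝ), 0 ≤ M → DifferentiableOn ℂ G U →
      (∀ z : E, ball z δ' ⊆ U → ‖fderiv ℂ G z‖ ≤ M) →
      ∀ a ∈ K, ∀ b ∈ K, ‖G b - G a‖ ≤ M * L := by
  obtain ⟨c₀, hc₀⟩ := hKne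
  -- for each c in K choose radius and reach data
  have hdata : ∀ c ∈ K, ∃ rc > 0, ball c rc ⊆ U ∧
      ∃ δc > 0, ∃ Lc, 0 ≤ Lc ∧ ∀ (G : E → F) (M : ℝ), 0 ≤ M → DifferentiableOn ℂ G U →
        (∀ z : E, ball z δc ⊆ U → ‖fderiv ℂ G z‖ ≤ M) → ‖G c - G c₀‖ ≤ M * Lc := by
    intro c hc
    obtain ⟨rc, hrc, hrcU⟩ := Metric.isOpen_iff.mp hU c (hKU hc)
    obtain ⟨δc, hδc, Lc, hLc, hb⟩ := reach_bound (F := F) hU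
      (reach_of_mem hU hconn (hKU hc₀) c (hKU hc))
    exact ⟨rc, hrc, hrcU, δc, hδc, Lc, hLc, hb⟩
  choose! rc hrc hrcU δc hδc Lc hLc hbc using hdata
  -- finite subcover
  have hcov : K ⊆ ⋃ c ∈ K, ball c (rc c / 2) := fun x hx =>
    mem_biUnion hx (mem_ball_self (by linarith [hrc x hx]))
  obtain ⟨t, htK, htfin, htcov⟩ := hK.elim_finite_subcover_image
    (fun c _ => isOpen_ball) hcov
  set s := htfin.toFinset with hs_def
  have hs_mem : ∀ i, i ∈ s ↔ i ∈ t := fun i => htfin.mem_toFinset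
  have hsK : ∀ i ∈ s, i ∈ K := fun i hi => htK ((hs_mem i).mp hi)
  have hsne : s.Nonempty := by
    have hmem := htcov hc₀
    simp only [mem_iUnion] at hmem
    obtain ⟨i, hi, -⟩ := hmem
    exact ⟨i, (hs_mem i).mpr hi⟩
  set δ' := s.inf' hsne fun i => min (δc i) (rc i / 2) with hδ'_def
  have hδ'pos : 0 < δ' := by
    rw [hδ'_def, Finset.lt_inf'_iff]
    intro i hi
    exact lt_min (hδc i (hsK i hi)) (by linarith [hrc i (hsK i hi)])
  have hδ'le : ∀ i ∈ s, δ' ≤ min (δc i) (rc i / 2) := fun i hi =>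
    Finset.inf'_le _ hi
  set L₀ := s.sup' hsne fun i => Lc i + rc i with hL₀_def
  have hL₀ : ∀ i ∈ s, Lc i + rc i ≤ L₀ := fun i hi => Finset.le_sup' (fun i => Lc i + rc i) hi
  have hL₀0 : 0 ≤ L₀ := by
    obtain ⟨i, hi⟩ := hsne
    calc (0:ℝ) ≤ Lc i + rc i := by
          have := hLc i (hsK i hi); have := hrc i (hsK i hi); linarith
      _ ≤ L₀ := hL₀ i hi
  refine ⟨δ', hδ'pos, 2 * L₀, by linarith, ?_⟩
  intro G M hM hGd hGb a haK b hbK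
  -- single point estimate
  have hpoint : ∀ a ∈ K, ‖G a - G c₀‖ ≤ M * L₀ := by
    intro a haK
    have hmem := htcov haK
    simp only [mem_iUnion] at hmem
    obtain ⟨i, hit, hiball⟩ := hmem
    have his : i ∈ s := (hs_mem i).mpr hit
    have hiK : i ∈ K := hsK i his
    have hrcpos := hrc i hiK
    have h1 : ‖G a - G i‖ ≤ M * (rc i / 2) := by
      have hmvt : ‖G a - G i‖ ≤ M * ‖a - i‖ := by
        apply Convex.norm_image_sub_le_of_norm_fderiv_le (𝕜 := ℂ) (s := segment ℝ i a)
        · intro x hx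
          have hxball : x ∈ ball i (rc i / 2) :=
            (convex_ball i (rc i / 2)).segment_subset (mem_ball_self (by linarith)) hiball hx
          have hxU : x ∈ U := hrcU i hiK (ball_subset_ball (by linarith) hxball)
          exact (hGd x hxU).differentiableAt (hU.mem_nhds hxU)
        · intro x hx
          have hxball : x ∈ ball i (rc i / 2) :=
            (convex_ball i (rc i / 2)).segment_subset (mem_ball_self (by linarith)) hiball hx
          apply hGb
          intro y hy
          apply hrcU i hiK
          have h2 : dist y x < rc i / 2 := by
            calc dist y x < δ' := mem_ball.mp hy
              _ ≤ rc i / 2 := le_trans (hδ'le i his) (min_le_right _ _)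
          calc dist y i ≤ dist y x + dist x i := dist_triangle _ _ _
            _ < rc i / 2 + rc i / 2 := add_lt_add h2 (mem_ball.mp hxball)
            _ = rc i := by ring
        · exact convex_segment i a
        · exact left_mem_segment ℝ i a
        · exact right_mem_segment ℝ i a
      have : ‖a - i‖ ≤ rc i / 2 := by
        rw [← dist_eq_norm]
        exact le_of_lt (mem_ball.mp hiball)
      calc ‖G a - G i‖ ≤ M * ‖a - i‖ := hmvt
        _ ≤ M * (rc i / 2) := mul_le_mul_of_nonneg_left this hM
    have h2 : ‖G i - G c₀‖ ≤ M * Lc i := by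
      apply hbc i hiK G M hM hGd
      intro z hz
      apply hGb
      exact fun y hy => hz (ball_subset_ball (le_trans (hδ'le i his) (min_le_left _ _)) hy)
    calc ‖G a - G c₀‖ ≤ ‖G a - G i‖ + ‖G i - G c₀‖ := norm_sub_le_norm_sub_add_norm_sub _ _ _
      _ ≤ M * (rc i / 2) + M * Lc i := add_le_add h1 h2
      _ ≤ M * (Lc i + rc i) := by nlinarith [hrc i hiK]
      _ ≤ M * L₀ := mul_le_mul_of_nonneg_left (hL₀ i his) hM
  calc ‖G b - G a‖ ≤ ‖G b - G c₀‖ + ‖G c₀ - G a‖ := norm_sub_le_norm_sub_add_norm_sub _ _ _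
    _ ≤ M * L₀ + M * L₀ := by
        refine add_le_add (hpoint b hbK) ?_
        rw [norm_sub_rev]
        exact hpoint a haK
    _ = M * (2 * L₀) := by ring

variable {E : Type*} [NormedAddCommGroup E] [NormedSpace ℂ E] in
/-- Key Earle–Hamilton style estimate on derivatives of iterates. -/
lemma iterate_deriv_bound {U K : Set E} (hU : IsOpen U)
    {δ dK R' : ℝ} (hδ : 0 < δ) (hKδ : ∀ p ∈ K, ball p δ ⊆ U)
    (hdK : ∀ p ∈ K, ∀ q ∈ K, dist p q ≤ dK) (hdK0 : 0 ≤ dK)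
    (hR' : 0 < R') (hUR : ∀ u ∈ U, ‖u‖ < R')
    {f : E → E} (hf : DifferentiableOn ℂ f U) (hfK : ∀ z ∈ U, f z ∈ U ∧ f z ∈ K)
    {z : E} (hz : z ∈ U) {r : ℝ} (hr : 0 < r) (hball : ball z r ⊆ U)
    (n : ℕ) (v : E) :
    ‖fderiv ℂ (f^[n]) z v‖ ≤
      R' * ((1 / (1 + δ / (2 * (dK + 1)))) ^ n * (‖v‖ / r)) := by
  set ε : ℝ := δ / (2 * (dK + 1)) with hε_def
  have hεpos : 0 < ε := by positivity
  set θ : ℝ := 1 / (1 + ε) with hθ_def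
  have hθpos : 0 < θ := by positivity
  have hit : ∀ k, f^[k] z ∈ U := by
    intro k
    induction k with
    | zero => simpa using hz
    | succ k ih => rw [Function.iterate_succ_apply']; exact (hfK _ ih).1
  have hitd : ∀ k, ∀ w ∈ U, DifferentiableAt ℂ (f^[k]) w := by
    intro k
    induction k with
    | zero => intro w _; simpa using differentiableAt_id
    | succ k ih =>
        intro w hw
        have h1 : DifferentiableAt ℂ f w := (hf w hw).differentiableAt (hU.mem_nhds hw)
        have h2 : DifferentiableAt ℂ (f^[k]) (f w) := ih (f w) (hfK w hw).1
        rw [Function.iterate_succ]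
        exact h2.comp w h1
  have hchain : ∀ k, fderiv ℂ (f^[k+1]) z =
      (fderiv ℂ f (f^[k] z)).comp (fderiv ℂ (f^[k]) z) := by
    intro k
    have h1 : HasFDerivAt (f^[k]) (fderiv ℂ (f^[k]) z) z := (hitd k z hz).hasFDerivAt
    have h2 : HasFDerivAt f (fderiv ℂ f (f^[k] z)) (f^[k] z) :=
      ((hf _ (hit k)).differentiableAt (hU.mem_nhds (hit k))).hasFDerivAt
    have h3 := h2.comp z h1
    have h4 : HasFDerivAt (f^[k+1]) ((fderiv ℂ f (f^[k] z)).comp (fderiv ℂ (f^[k]) z)) z := by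
      rw [Function.iterate_succ']
      exact h3
    exact h4.fderiv
  have main : ∀ k, ∀ h : E → ℂ, DifferentiableOn ℂ h U → (∀ u ∈ U, ‖h u‖ < 1) →
      ‖fderiv ℂ h (f^[k] z) (fderiv ℂ (f^[k]) z v)‖ ≤
        (1 - ‖h (f^[k] z)‖ ^ 2) * (θ ^ k * (‖v‖ / r)) := by
    intro k
    induction k with
    | zero =>
        intro h hd hb
        have := schwarz_pick hU hd hb hr hball v
        simpa [mul_div_assoc] using this
    | succ k ih =>
        intro h hd hb
        set p := f^[k] z with hp_def
        have hpU : p ∈ U := hit k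
        set c := f p with hc_def
        have hcK : c ∈ K := (hfK p hpU).2
        have hcU : c ∈ U := (hfK p hpU).1
        have hfk1 : f^[k+1] z = c := by rw [Function.iterate_succ_apply']
        set g : E → E := fun u => f u + (ε : ℂ) • (f u - c) with hg_def
        have hgU : ∀ u ∈ U, g u ∈ U := by
          intro u hu
          have hfuK : f u ∈ K := (hfK u hu).2
          apply hKδ (f u) hfuK
          rw [mem_ball, hg_def]
          simp only [dist_eq_norm, add_sub_cancel_left]
          rw [norm_smul, Complex.norm_real, Real.norm_eq_abs, abs_of_pos hεpos]
          have hle : ‖f u - c‖ ≤ dK := by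
            rw [← dist_eq_norm]; exact hdK (f u) hfuK c hcK
          calc ε * ‖f u - c‖ ≤ ε * dK := mul_le_mul_of_nonneg_left hle hεpos.le
            _ = δ * dK / (2 * (dK + 1)) := by rw [hε_def]; ring
            _ < δ := by rw [div_lt_iff₀ (by positivity)]; nlinarith
        have hgd : DifferentiableOn ℂ g U := fun u hu =>
          ((hf u hu).add (((hf u hu).sub_const c).const_smul ((ε:ℝ):ℂ)))
        have hhg : DifferentiableOn ℂ (h ∘ g) U := by
          intro u hu
          exact ((hd _ (hgU u hu)).differentiableAt
            (hU.mem_nhds (hgU u hu))).comp_differentiableWithinAt u (hgd u hu)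
        have hbg : ∀ u ∈ U, ‖(h ∘ g) u‖ < 1 := fun u hu => hb _ (hgU u hu)
        have hIH := ih (h ∘ g) hhg hbg
        have hgp : g p = c := by simp [hg_def, ← hc_def]
        have hDf : HasFDerivAt f (fderiv ℂ f p) p :=
          ((hf p hpU).differentiableAt (hU.mem_nhds hpU)).hasFDerivAt
        have hg' : HasFDerivAt g (fderiv ℂ f p + ((ε:ℝ):ℂ) • fderiv ℂ f p) p :=
          hDf.add ((hDf.sub_const c).const_smul ((ε:ℝ):ℂ))
        have hdc : HasFDerivAt h (fderiv ℂ h c) (g p) := by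
          rw [hgp]
          exact ((hd c hcU).differentiableAt (hU.mem_nhds hcU)).hasFDerivAt
        have hcompd : fderiv ℂ (h ∘ g) p
            = (fderiv ℂ h c).comp (fderiv ℂ f p + ((ε:ℝ):ℂ) • fderiv ℂ f p) :=
          (hdc.comp p hg').fderiv
        have hL : fderiv ℂ (h ∘ g) p (fderiv ℂ (f^[k]) z v)
            = (((1+ε:ℝ)):ℂ) • fderiv ℂ h c (fderiv ℂ (f^[k+1]) z v) := by
          rw [hcompd, hchain k]
          have e1 : (fderiv ℂ f p + ((ε:ℝ):ℂ) • fderiv ℂ f p) ((fderiv ℂ (f^[k]) z) v)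
              = ((1+ε:ℝ):ℂ) • ((fderiv ℂ f p) ((fderiv ℂ (f^[k]) z) v)) := by
            simp only [ContinuousLinearMap.add_apply, ContinuousLinearMap.smul_apply]
            have e2 : ((1+ε:ℝ):ℂ) = 1 + ((ε:ℝ):ℂ) := by push_cast; ring
            rw [e2, add_smul, one_smul]
          simp only [ContinuousLinearMap.comp_apply, ← hp_def]
          rw [e1, map_smul]
        have hhgp : (h ∘ g) p = h c := by rw [comp_apply, hgp]
        rw [hL, hhgp, norm_smul, Complex.norm_real, Real.norm_eq_abs,
          abs_of_pos (by positivity : (0:ℝ) < 1 + ε)] at hIH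
        rw [hfk1]
        have h1ε : (0:ℝ) < 1 + ε := by positivity
        have hle2 : ‖fderiv ℂ h c (fderiv ℂ (f^[k+1]) z v)‖
            ≤ (1 - ‖h c‖ ^ 2) * (θ ^ k * (‖v‖ / r)) / (1 + ε) := by
          rw [le_div_iff₀ h1ε]
          linarith [hIH]
        calc ‖fderiv ℂ h c (fderiv ℂ (f^[k+1]) z v)‖
            ≤ (1 - ‖h c‖ ^ 2) * (θ ^ k * (‖v‖ / r)) / (1 + ε) := hle2
          _ = (1 - ‖h c‖ ^ 2) * (θ ^ (k+1) * (‖v‖ / r)) := by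
              rw [pow_succ, hθ_def]
              ring
  -- conclude using a dual functional
  rcases eq_or_ne (fderiv ℂ (f^[n]) z v) 0 with hw | hw
  · rw [hw, norm_zero]
    positivity
  obtain ⟨ℓ, hℓnorm, hℓval⟩ := exists_dual_vector ℂ (fderiv ℂ (f^[n]) z v) (norm_ne_zero_iff.mpr hw)
  set h₀ : E → ℂ := fun u => ((R':ℝ):ℂ)⁻¹ * ℓ u with hh₀_def
  have hRne : ((R':ℝ):ℂ) ≠ 0 := by
    simp only [ne_eq, Complex.ofReal_eq_zero]
    exact hR'.ne'
  have hh₀d : DifferentiableOn ℂ h₀ U := fun u hu =>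
    (ℓ.differentiableAt.const_mul _).differentiableWithinAt
  have hh₀b : ∀ u ∈ U, ‖h₀ u‖ < 1 := by
    intro u hu
    rw [hh₀_def]
    simp only [norm_mul, norm_inv, Complex.norm_real, Real.norm_eq_abs, abs_of_pos hR']
    rw [inv_mul_lt_iff₀ hR', mul_one]
    calc ‖ℓ u‖ ≤ ‖ℓ‖ * ‖u‖ := ℓ.le_opNorm u
      _ = ‖u‖ := by rw [hℓnorm, one_mul]
      _ < R' := hUR u hu
  have hder : ∀ q : E, HasFDerivAt h₀ (((R':ℝ):ℂ)⁻¹ • (ℓ : E →L[ℂ] ℂ)) q := by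
    intro q
    exact ℓ.hasFDerivAt.const_mul _
  have hmain := main n h₀ hh₀d hh₀b
  rw [(hder (f^[n] z)).fderiv] at hmain
  have hLHS : ‖(((R':ℝ):ℂ)⁻¹ • (ℓ : E →L[ℂ] ℂ)) (fderiv ℂ (f^[n]) z v)‖
      = ‖fderiv ℂ (f^[n]) z v‖ / R' := by
    rw [ContinuousLinearMap.smul_apply, norm_smul, hℓval, norm_inv]
    simp only [Complex.norm_real, RCLike.norm_ofReal, Real.norm_eq_abs]
    rw [_root_.abs_of_pos hR', _root_.abs_of_nonneg (norm_nonneg _)]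
    ring
  rw [hLHS] at hmain
  have hsq : 0 ≤ ‖h₀ (f^[n] z)‖ ^ 2 := sq_nonneg _
  have h1 : ‖fderiv ℂ (f^[n]) z v‖ / R' ≤ θ ^ n * (‖v‖ / r) := by
    calc ‖fderiv ℂ (f^[n]) z v‖ / R' ≤ (1 - ‖h₀ (f^[n] z)‖ ^ 2) * (θ ^ n * (‖v‖ / r)) := hmain
      _ ≤ 1 * (θ ^ n * (‖v‖ / r)) := by
          apply mul_le_mul_of_nonneg_right _ (by positivity)
          linarith
      _ = θ ^ n * (‖v‖ / r) := one_mul _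
  rw [div_le_iff₀ hR'] at h1
  linarith

end EarleHamiltonAux

/-- Holomorphic fixed-point lemma (Lemma `pf` of the paper). Let
`U ⊆ ℂ^m` be open, connected, bounded, `K ⊆ U` compact, `closure U ⊆ D` with `D`
open, `V ⊆ ℂᴺ` open, and `Ψ : V × D → ℂ^m` holomorphic with `Ψ(x,·)(U) ⊆ K` for
every `x ∈ V`. Then each `Ψ(x,·)` has a unique fixed point `ζ(x)` in `closure U`;
it lies in `U`, depends holomorphically on `x`, and all eigenvalues of the
derivative of `Ψ(x,·)` at `ζ(x)` have modulus `< 1`. -/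
theorem stmt_10 (m N : ℕ) (hm : 1 ≤ m) (hN : 1 ≤ N)
    (D U K : Set (Fin m → ℂ)) (V : Set (Fin N → ℂ))
    (hD : IsOpen D) (hU : IsOpen U) (hUconn : IsConnected U)
    (hUbdd : Bornology.IsBounded U) (hK : IsCompact K)
    (hKU : K ⊆ U) (hUD : closure U ⊆ D) (hV : IsOpen V)
    (Ψ : (Fin N → ℂ) → (Fin m → ℂ) → (Fin m → ℂ))
    (hΨ : DifferentiableOn ℂ (fun p : (Fin N → ℂ) × (Fin m → ℂ) => Ψ p.1 p.2)
      (V ×ˢ D))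
    (hΨK : ∀ x ∈ V, ∀ z ∈ U, Ψ x z ∈ K) :
    ∃ ζ : (Fin N → ℂ) → (Fin m → ℂ),
      DifferentiableOn ℂ ζ V ∧
      ∀ x ∈ V, ζ x ∈ U ∧ Ψ x (ζ x) = ζ x ∧
        (∀ y ∈ closure U, Ψ x y = y → y = ζ x) ∧
        (∀ μ : ℂ, Module.End.HasEigenvalue
            ((fderiv ℂ (Ψ x) (ζ x)).toLinearMap) μ → ‖μ‖ < 1) := by
  classical
  rcases V.eq_empty_or_nonempty with rfl | ⟨x₀, hx₀⟩
  · exact ⟨fun _ => 0, differentiableOn_empty, fun x hx => absurd hx (notMem_empty x)⟩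
  obtain ⟨u₀, hu₀⟩ := hUconn.nonempty
  have hUD' : U ⊆ D := fun z hz => hUD (subset_closure hz)
  have hKne : K.Nonempty := ⟨Ψ x₀ u₀, hΨK x₀ hx₀ u₀ hu₀⟩
  -- geometric constants
  obtain ⟨δ, hδpos, hthick⟩ := hK.exists_thickening_subset_open hU hKU
  have hKδ : ∀ p ∈ K, ball p δ ⊆ U := fun p hp y hy =>
    hthick (Metric.mem_thickening_iff.mpr ⟨p, hp, mem_ball.mp hy⟩)
  obtain ⟨dK, hdKb⟩ := Metric.isBounded_iff.mp hK.isBounded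
  have hdK : ∀ p ∈ K, ∀ q ∈ K, dist p q ≤ dK := fun p hp q hq => hdKb hp hq
  have hdK0 : 0 ≤ dK := by
    obtain ⟨k₀, hk₀⟩ := hKne
    have := hdK k₀ hk₀ k₀ hk₀
    rw [dist_self] at this
    exact this
  obtain ⟨R₀, hR₀⟩ := hUbdd.subset_closedBall 0
  have hR₀0 : 0 ≤ R₀ := le_trans (norm_nonneg u₀) (by simpa using hR₀ hu₀)
  set R' : ℝ := R₀ + 1 with hR'_def
  have hR'pos : 0 < R' := by positivity
  have hUR : ∀ u ∈ U, ‖u‖ < R' := by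
    intro u hu
    have : ‖u‖ ≤ R₀ := by simpa using hR₀ hu
    linarith
  set ε : ℝ := δ / (2 * (dK + 1)) with hε_def
  have hεpos : 0 < ε := by positivity
  set θ : ℝ := 1 / (1 + ε) with hθ_def
  have hθpos : 0 < θ := by positivity
  have hθlt : θ < 1 := by
    rw [hθ_def, div_lt_one (by positivity)]
    linarith
  -- basic per-x facts
  have hΨxD : ∀ x ∈ V, DifferentiableOn ℂ (Ψ x) D := by
    intro x hx z hz
    have hp : DifferentiableAt ℂ (fun p : (Fin N → ℂ) × (Fin m → ℂ) => Ψ p.1 p.2) (x, z) :=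
      (hΨ _ ⟨hx, hz⟩).differentiableAt ((hV.prod hD).mem_nhds ⟨hx, hz⟩)
    exact (hp.comp z (DifferentiableAt.prodMk (differentiableAt_const x) differentiableAt_id)).differentiableWithinAt
  have hΨxU : ∀ x ∈ V, DifferentiableOn ℂ (Ψ x) U := fun x hx => (hΨxD x hx).mono hUD'
  have hfmaps : ∀ x ∈ V, ∀ z ∈ U, Ψ x z ∈ U ∧ Ψ x z ∈ K := fun x hx z hz =>
    ⟨hKU (hΨK x hx z hz), hΨK x hx z hz⟩
  have hitdiff : ∀ x ∈ V, ∀ n, DifferentiableOn ℂ ((Ψ x)^[n]) U := by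
    intro x hx n
    induction n with
    | zero => simpa using differentiableOn_id
    | succ n ih =>
        rw [Function.iterate_succ]
        exact DifferentiableOn.comp ih (hΨxU x hx) (fun z hz => (hfmaps x hx z hz).1)
  obtain ⟨δ', hδ'pos, L, hL0, hreach⟩ := reach_K (F := Fin m → ℂ) hU
    hUconn.isPreconnected hK hKU hKne
  -- uniform operator-norm bound for derivatives of iterates
  have hGM : ∀ x ∈ V, ∀ n : ℕ, ∀ z : Fin m → ℂ, ball z δ' ⊆ U →
      ‖fderiv ℂ ((Ψ x)^[n]) z‖ ≤ R' / δ' * θ ^ n := by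
    intro x hx n z hb
    apply ContinuousLinearMap.opNorm_le_bound _ (by positivity)
    intro v
    have hzU : z ∈ U := hb (mem_ball_self hδ'pos)
    have h1 := iterate_deriv_bound hU hδpos hKδ hdK hdK0 hR'pos hUR
      (hΨxU x hx) (hfmaps x hx) hzU hδ'pos hb n v
    calc ‖fderiv ℂ ((Ψ x)^[n]) z v‖ ≤ R' * (θ ^ n * (‖v‖ / δ')) := h1
      _ = R' / δ' * θ ^ n * ‖v‖ := by ring
  -- the iteration sequence
  set seq : ℕ → (Fin N → ℂ) → (Fin m → ℂ) := fun n x => (Ψ x)^[n] (Ψ x u₀) with hseq_def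
  have hseq_succ : ∀ n x, seq (n+1) x = Ψ x (seq n x) := by
    intro n x
    rw [hseq_def]
    exact Function.iterate_succ_apply' (Ψ x) n (Ψ x u₀)
  have hseqK : ∀ x ∈ V, ∀ n, seq n x ∈ K := by
    intro x hx n
    induction n with
    | zero => simpa [hseq_def] using hΨK x hx u₀ hu₀
    | succ n ih => rw [hseq_succ]; exact hΨK x hx _ (hKU ih)
  set Cg : ℝ := R' / δ' * L with hCg_def
  have hCg0 : 0 ≤ Cg := by positivity
  have hstep : ∀ x ∈ V, ∀ n, dist (seq n x) (seq (n+1) x) ≤ Cg * θ ^ n := by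
    intro x hx n
    have ha : Ψ x u₀ ∈ K := hΨK x hx u₀ hu₀
    have hb : Ψ x (Ψ x u₀) ∈ K := hΨK x hx _ (hKU ha)
    have h1 : seq (n+1) x = (Ψ x)^[n] (Ψ x (Ψ x u₀)) := by
      rw [hseq_def]
      exact Function.iterate_succ_apply (Ψ x) n (Ψ x u₀)
    rw [dist_eq_norm, norm_sub_rev, h1, hseq_def]
    have h2 := hreach ((Ψ x)^[n]) (R' / δ' * θ ^ n) (by positivity)
      (hitdiff x hx n) (hGM x hx n) (Ψ x u₀) ha (Ψ x (Ψ x u₀)) hb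
    calc ‖(Ψ x)^[n] (Ψ x (Ψ x u₀)) - (Ψ x)^[n] (Ψ x u₀)‖ ≤ R' / δ' * θ ^ n * L := h2
      _ = Cg * θ ^ n := by rw [hCg_def]; ring
  have hcauchy : ∀ x ∈ V, CauchySeq (fun n => seq n x) := fun x hx =>
    cauchySeq_of_le_geometric θ Cg hθlt (hstep x hx)
  -- the fixed point function
  set ζ : (Fin N → ℂ) → (Fin m → ℂ) := fun x =>
    if hx : ∃ a, Tendsto (fun n => seq n x) atTop (𝓝 a) then hx.choose else 0 with hζ_def
  have hζ : ∀ x ∈ V, Tendsto (fun n => seq n x) atTop (𝓝 (ζ x)) := by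
    intro x hx
    have h1 : ∃ a, Tendsto (fun n => seq n x) atTop (𝓝 a) :=
      cauchySeq_tendsto_of_complete (hcauchy x hx)
    have h2 : ζ x = h1.choose := by simp only [hζ_def]; rw [dif_pos h1]
    rw [h2]
    exact h1.choose_spec
  have hζK : ∀ x ∈ V, ζ x ∈ K := fun x hx =>
    hK.isClosed.mem_of_tendsto (hζ x hx) (Filter.Eventually.of_forall (hseqK x hx))
  have hζU : ∀ x ∈ V, ζ x ∈ U := fun x hx => hKU (hζK x hx)
  have hfix : ∀ x ∈ V, Ψ x (ζ x) = ζ x := by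
    intro x hx
    have hζD : ζ x ∈ D := hUD' (hζU x hx)
    have hcont : ContinuousAt (Ψ x) (ζ x) :=
      ((hΨxD x hx _ hζD).differentiableAt (hD.mem_nhds hζD)).continuousAt
    have h1 : Tendsto (fun n => Ψ x (seq n x)) atTop (𝓝 (Ψ x (ζ x))) :=
      hcont.tendsto.comp (hζ x hx)
    have h2 : (fun n => Ψ x (seq n x)) = fun n => seq (n+1) x :=
      funext fun n => (hseq_succ n x).symm
    have h3 : Tendsto (fun n => seq (n+1) x) atTop (𝓝 (ζ x)) :=
      (hζ x hx).comp (tendsto_add_atTop_nat 1)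
    exact tendsto_nhds_unique (h2 ▸ h1) h3
  have hdistgeo : ∀ x ∈ V, ∀ n, dist (seq n x) (ζ x) ≤ Cg * θ ^ n / (1 - θ) :=
    fun x hx => dist_le_of_le_geometric_of_tendsto θ Cg hθlt (hstep x hx) (hζ x hx)
  have h1θ : 0 < 1 - θ := by linarith
  -- uniqueness
  have huniq : ∀ x ∈ V, ∀ y ∈ closure U, Ψ x y = y → y = ζ x := by
    intro x hx y hyU hyfix
    have hyK : y ∈ K := by
      have hcont : ContinuousOn (Ψ x) (closure U) := ((hΨxD x hx).mono hUD).continuousOn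
      have h1 : Ψ x y ∈ closure (Ψ x '' U) :=
        hcont.image_closure (mem_image_of_mem (Ψ x) hyU)
      have h2 : closure (Ψ x '' U) ⊆ K := by
        rw [← hK.isClosed.closure_eq]
        exact closure_mono (image_subset_iff.mpr fun z hz => hΨK x hx z hz)
      rw [← hyfix]
      exact h2 h1
    have hfixiter : ∀ n, (Ψ x)^[n] y = y := fun n => Function.iterate_fixed hyfix n
    have hfixiterζ : ∀ n, (Ψ x)^[n] (ζ x) = ζ x := fun n =>
      Function.iterate_fixed (hfix x hx) n
    have hbound : ∀ n, ‖ζ x - y‖ ≤ R' / δ' * θ ^ n * L := by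
      intro n
      have h2 := hreach ((Ψ x)^[n]) (R' / δ' * θ ^ n) (by positivity)
        (hitdiff x hx n) (hGM x hx n) y hyK (ζ x) (hζK x hx)
      rwa [hfixiter n, hfixiterζ n] at h2
    have hlim : Tendsto (fun n : ℕ => R' / δ' * θ ^ n * L) atTop (𝓝 0) := by
      have h3 := (tendsto_pow_atTop_nhds_zero_of_lt_one hθpos.le hθlt).const_mul (R' / δ')
      have h4 := h3.mul_const L
      simpa using h4
    have h4 : ‖ζ x - y‖ ≤ 0 := ge_of_tendsto hlim (Filter.Eventually.of_forall hbound)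
    have h5 : ζ x - y = 0 := by
      have := norm_nonneg (ζ x - y)
      have h6 : ‖ζ x - y‖ = 0 := le_antisymm h4 this
      exact norm_eq_zero.mp h6
    have := sub_eq_zero.mp h5
    exact this.symm
  -- eigenvalues
  have heig : ∀ x ∈ V, ∀ μ : ℂ, Module.End.HasEigenvalue
      ((fderiv ℂ (Ψ x) (ζ x)).toLinearMap) μ → ‖μ‖ < 1 := by
    intro x hx μ hμ
    obtain ⟨v, hv⟩ := hμ.exists_hasEigenvector
    have hvne : v ≠ 0 := hv.right
    have hAv : fderiv ℂ (Ψ x) (ζ x) v = μ • v := hv.apply_eq_smul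
    have hfixiterζ : ∀ n, (Ψ x)^[n] (ζ x) = ζ x := fun n =>
      Function.iterate_fixed (hfix x hx) n
    have hitd : ∀ n, ∀ w ∈ U, DifferentiableAt ℂ ((Ψ x)^[n]) w := fun n w hw =>
      (hitdiff x hx n w hw).differentiableAt (hU.mem_nhds hw)
    have hchain : ∀ n, fderiv ℂ ((Ψ x)^[n+1]) (ζ x) =
        (fderiv ℂ (Ψ x) (ζ x)).comp (fderiv ℂ ((Ψ x)^[n]) (ζ x)) := by
      intro n
      have h1 : HasFDerivAt ((Ψ x)^[n]) (fderiv ℂ ((Ψ x)^[n]) (ζ x)) (ζ x) :=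
        (hitd n _ (hζU x hx)).hasFDerivAt
      have h2 : HasFDerivAt (Ψ x) (fderiv ℂ (Ψ x) (ζ x)) ((Ψ x)^[n] (ζ x)) := by
        rw [hfixiterζ n]
        exact ((hΨxU x hx _ (hζU x hx)).differentiableAt
          (hU.mem_nhds (hζU x hx))).hasFDerivAt
      have h3 := h2.comp (ζ x) h1
      have h4 : HasFDerivAt ((Ψ x)^[n+1])
          ((fderiv ℂ (Ψ x) (ζ x)).comp (fderiv ℂ ((Ψ x)^[n]) (ζ x))) (ζ x) := by
        rw [Function.iterate_succ']
        exact h3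
      exact h4.fderiv
    have hpow : ∀ n, fderiv ℂ ((Ψ x)^[n]) (ζ x) v = μ ^ n • v := by
      intro n
      induction n with
      | zero => simp
      | succ n ih =>
          rw [hchain n, ContinuousLinearMap.comp_apply, ih, map_smul, hAv, smul_smul,
            pow_succ]
    by_contra hcon
    push_neg at hcon
    have hnv : 0 < ‖v‖ := norm_pos_iff.mpr hvne
    have hb1 : ∀ n, ‖μ‖ ^ n * ‖v‖ ≤ R' * (θ ^ n * (‖v‖ / δ)) := by
      intro n
      have h5 := iterate_deriv_bound hU hδpos hKδ hdK hdK0 hR'pos hUR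
        (hΨxU x hx) (hfmaps x hx) (hζU x hx) hδpos (hKδ _ (hζK x hx)) n v
      rw [hpow n, norm_smul, norm_pow] at h5
      exact h5
    have hlim : Tendsto (fun n : ℕ => R' / δ * θ ^ n) atTop (𝓝 0) := by
      simpa using (tendsto_pow_atTop_nhds_zero_of_lt_one hθpos.le hθlt).const_mul (R' / δ)
    obtain ⟨n, hn⟩ := (hlim.eventually (gt_mem_nhds one_pos)).exists
    have h6 : (1:ℝ) ≤ ‖μ‖ ^ n := one_le_pow₀ hcon
    have h7 := hb1 n
    have h8 : R' * (θ ^ n * (‖v‖ / δ)) = R' / δ * θ ^ n * ‖v‖ := by ring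
    rw [h8] at h7
    nlinarith
  -- holomorphy of the fixed point
  have hseqdiff : ∀ n, DifferentiableOn ℂ (seq n) V := by
    intro n
    induction n with
    | zero =>
        have he : seq 0 = fun x => Ψ x u₀ := funext fun x => by simp [hseq_def]
        rw [he]
        exact hΨ.comp (f := fun x => (x, u₀)) (differentiableOn_id.prodMk (differentiableOn_const u₀))
          (fun x hx => ⟨hx, hUD' hu₀⟩)
    | succ n ih =>
        have he : seq (n+1) = fun x => Ψ x (seq n x) := funext fun x => hseq_succ n x
        rw [he]
        exact hΨ.comp (f := fun x => (x, seq n x)) (differentiableOn_id.prodMk ih)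
          (fun x hx => ⟨hx, hUD' (hKU (hseqK x hx n))⟩)
  have hζdiff : DifferentiableOn ℂ ζ V := by
    intro x₁ hx₁
    obtain ⟨ρ, hρpos, hρV⟩ := Metric.isOpen_iff.mp hV x₁ hx₁
    have hρ2 : 0 < ρ / 2 := by linarith
    set s : Set (Fin N → ℂ) := ball x₁ (ρ/2) with hs_def
    have hsV : s ⊆ V := fun y hy => hρV (ball_subset_ball (by linarith) hy)
    have hsballV : ∀ y ∈ s, ball y (ρ/2) ⊆ V := by
      intro y hy z hz
      apply hρV
      rw [mem_ball] at *
      calc dist z x₁ ≤ dist z y + dist y x₁ := dist_triangle _ _ _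
        _ < ρ/2 + ρ/2 := add_lt_add hz hy
        _ = ρ := by ring
    have hBnd : ∀ p q : ℕ, ∀ y ∈ V,
        ‖seq p y - seq q y‖ ≤ Cg * θ ^ p / (1-θ) + Cg * θ ^ q / (1-θ) := by
      intro p q y hy
      calc ‖seq p y - seq q y‖ = dist (seq p y) (seq q y) := (dist_eq_norm _ _).symm
        _ ≤ dist (seq p y) (ζ y) + dist (ζ y) (seq q y) := dist_triangle _ _ _
        _ ≤ Cg * θ ^ p / (1-θ) + Cg * θ ^ q / (1-θ) :=
            add_le_add (hdistgeo y hy p) (by rw [dist_comm]; exact hdistgeo y hy q)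
    have hdAt : ∀ n, ∀ y ∈ V, DifferentiableAt ℂ (seq n) y := fun n y hy =>
      (hseqdiff n y hy).differentiableAt (hV.mem_nhds hy)
    have hUCauchy : UniformCauchySeqOn (fun n y => fderiv ℂ (seq n) y) atTop s := by
      rw [Metric.uniformCauchySeqOn_iff]
      intro εe hεe
      have hlim2 : Tendsto (fun n : ℕ => 2 * (2 * (Cg * θ ^ n / (1-θ))) / (ρ/2))
          atTop (𝓝 0) := by
        have h0 := (tendsto_pow_atTop_nhds_zero_of_lt_one hθpos.le hθlt).const_mul
          (2 * (2 * (Cg / (1-θ))) / (ρ/2))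
        rw [mul_zero] at h0
        convert h0 using 2 with n
        ring
      obtain ⟨Nn, hNn⟩ := (Filter.eventually_atTop.mp
        (hlim2.eventually (gt_mem_nhds hεe)))
      refine ⟨Nn, fun p hp q hq y hy => ?_⟩
      have hyV : y ∈ V := hsV hy
      set Bpq : ℝ := Cg * θ ^ p / (1-θ) + Cg * θ ^ q / (1-θ) with hBpq_def
      have hBpq0 : 0 ≤ Bpq := by positivity
      have hφd : DifferentiableOn ℂ (fun y' => seq p y' - seq q y') V :=
        (hseqdiff p).sub (hseqdiff q)
      have hφb : ∀ u ∈ ball y (ρ/2), ‖seq p u - seq q u‖ ≤ Bpq := fun u hu =>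
        hBnd p q u (hsballV y hy hu)
      have hsubeq : fderiv ℂ (fun y' => seq p y' - seq q y') y
          = fderiv ℂ (seq p) y - fderiv ℂ (seq q) y :=
        fderiv_sub (hdAt p y hyV) (hdAt q y hyV)
      have hop : ‖fderiv ℂ (seq p) y - fderiv ℂ (seq q) y‖ ≤ 2 * Bpq / (ρ/2) := by
        rw [← hsubeq]
        apply ContinuousLinearMap.opNorm_le_bound _ (by positivity)
        intro v
        have := cauchy_bound hV hφd hρ2 hBpq0 (hsballV y hy) hφb v
        calc ‖fderiv ℂ (fun y' => seq p y' - seq q y') y v‖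
            ≤ 2 * Bpq * ‖v‖ / (ρ/2) := this
          _ = 2 * Bpq / (ρ/2) * ‖v‖ := by ring
      have hmono : ∀ j, Nn ≤ j → Cg * θ ^ j / (1-θ) ≤ Cg * θ ^ Nn / (1-θ) := by
        intro j hj
        have hpow := pow_le_pow_of_le_one hθpos.le hθlt.le hj
        have := mul_le_mul_of_nonneg_left hpow hCg0
        exact div_le_div_of_nonneg_right this h1θ.le
      rw [dist_eq_norm]
      calc ‖fderiv ℂ (seq p) y - fderiv ℂ (seq q) y‖ ≤ 2 * Bpq / (ρ/2) := hop
        _ ≤ 2 * (2 * (Cg * θ ^ Nn / (1-θ))) / (ρ/2) := by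
            refine div_le_div_of_nonneg_right ?_ hρ2.le
            have h1 := hmono p hp
            have h2 := hmono q hq
            rw [hBpq_def]
            linarith
        _ < εe := hNn Nn le_rfl
    have hFpt : ∀ y ∈ s, ∃ A, Tendsto (fun n => fderiv ℂ (seq n) y) atTop (𝓝 A) := by
      intro y hy
      apply cauchySeq_tendsto_of_complete
      rw [Metric.cauchySeq_iff]
      intro εe hεe
      obtain ⟨Nn, hNn⟩ := Metric.uniformCauchySeqOn_iff.mp hUCauchy εe hεe
      exact ⟨Nn, fun p hp q hq => hNn p hp q hq y hy⟩
    set Fl : (Fin N → ℂ) → ((Fin N → ℂ) →L[ℂ] (Fin m → ℂ)) := fun y =>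
      if hy : ∃ A, Tendsto (fun n => fderiv ℂ (seq n) y) atTop (𝓝 A)
      then hy.choose else 0 with hFl_def
    have hFl : ∀ y ∈ s, Tendsto (fun n => fderiv ℂ (seq n) y) atTop (𝓝 (Fl y)) := by
      intro y hy
      have h1 := hFpt y hy
      have h2 : Fl y = h1.choose := by simp only [hFl_def]; rw [dif_pos h1]
      rw [h2]
      exact h1.choose_spec
    have hTU : TendstoUniformlyOn (fun n y => fderiv ℂ (seq n) y) Fl atTop s :=
      hUCauchy.tendstoUniformlyOn_of_tendsto hFl
    have hHas : HasFDerivAt ζ (Fl x₁) x₁ :=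
      hasFDerivAt_of_tendstoUniformlyOn isOpen_ball hTU
        (fun n y hy => ((hseqdiff n y (hsV hy)).differentiableAt
          (hV.mem_nhds (hsV hy))).hasFDerivAt)
        (fun y hy => hζ y (hsV hy)) (mem_ball_self hρ2)
    exact hHas.differentiableAt.differentiableWithinAt
  exact ⟨ζ, hζdiff, fun x hx => ⟨hζU x hx, hfix x hx, huniq x hx, heig x hx⟩⟩
end
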